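/- arXiv:1402.2014 — 6 statements merged into one kernel-verified Lean document; each statement's English description precedes it below -/
import Mathlib

section
/- Let 0 ≤ α < β ≤ 1. Then the function φ : ℝ → ℝ defined by φ(t) = H_β(e^t, 1) / H_α(e^t, 1) for t ≠ 0 and φ(0) = 1 is positive definite. (Explicitly, for 0 < α < β one has φ(t) = (β/α)·sinh(αt)/sinh(βt) for t ≠ 0, and for α = 0 one has φ(t) = βt/sinh(βt) for t ≠ 0.) -/
open scoped ComplexOrder

/-- Logarithmic mean. -/
noncomputable def LM (x y : ℝ) : ℝ :=
  if x = y then x else (x - y) / (Real.log x - Real.log y)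

/-- The mean `A_α`, with `A_0 = LM`. -/
noncomputable def Amean (α x y : ℝ) : ℝ :=
  if x = y then x else if α = 0 then LM x y
  else α * (x ^ α + y ^ α) * (x - y) / (2 * (x ^ α - y ^ α))

/-- The mean `G_α`, with `G_0 = LM`. -/
noncomputable def Gmean (α x y : ℝ) : ℝ :=
  if x = y then x else if α = 0 then LM x y
  else α * (x * y) ^ (α / 2) * (x - y) / (x ^ α - y ^ α)

/-- The mean `H_α`, with `H_0 = LM`. -/
noncomputable def Hmean (α x y : ℝ) : ℝ :=
  if x = y then x else if α = 0 then LM x y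
  else 2 * α * (x * y) ^ α * (x - y) / ((x ^ α + y ^ α) * (x ^ α - y ^ α))

/-- The power difference mean `M_α`. -/
noncomputable def Mmean (α x y : ℝ) : ℝ :=
  if x = y then x
  else ((α - 1) / α) * (x ^ α - y ^ α) / (x ^ (α - 1) - y ^ (α - 1))

/-- A continuous real function `φ` is positive definite if every matrix
`[φ(tᵢ - tⱼ)]` is positive semidefinite (as a complex matrix). -/
def IsPosDefFun (φ : ℝ → ℝ) : Prop :=
  Continuous φ ∧ ∀ (n : ℕ) (t : Fin n → ℝ),
    Matrix.PosSemidef (Matrix.of fun i j : Fin n => (φ (t i - t j) : ℂ))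


open MeasureTheory Real Set Filter Topology Matrix
open scoped ComplexOrder

lemma contOn_ker {γ u v : ℝ} (hu : 0 < u) (hv : 0 < v) (s : Set ℝ) (hs : s ⊆ Ioi 0) :
    ContinuousOn (fun x : ℝ => x ^ γ / ((u + x) * (v + x))) s := by
  intro x hx
  have hx0 : (0:ℝ) < x := hs hx
  apply ContinuousWithinAt.div
  · exact (Real.continuousAt_rpow_const x γ (Or.inl hx0.ne')).continuousWithinAt
  · exact ((continuous_const.add continuous_id).mul (continuous_const.add continuous_id)).continuousWithinAt
  · positivity

lemma integrableOn_ker {γ u v : ℝ} (hγ0 : 0 ≤ γ) (hγ1 : γ < 1) (hu : 0 < u) (hv : 0 < v) :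
    IntegrableOn (fun x : ℝ => x ^ γ / ((u + x) * (v + x))) (Ioi 0) := by
  have key : Ioc (0:ℝ) 1 ∪ Ioi 1 = Ioi 0 := Ioc_union_Ioi_eq_Ioi zero_le_one
  rw [← key, integrableOn_union]
  constructor
  · apply Integrable.mono' (g := fun _ => (u*v)⁻¹)
    · exact integrableOn_const measure_Ioc_lt_top.ne
    · exact (contOn_ker hu hv _ (Ioc_subset_Ioi_self)).aestronglyMeasurable measurableSet_Ioc
    · filter_upwards [ae_restrict_mem measurableSet_Ioc] with x hx
      have hx0 : (0:ℝ) < x := hx.1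
      have h1 : x ^ γ ≤ 1 := Real.rpow_le_one hx0.le hx.2 hγ0
      have h2 : u * v ≤ (u + x) * (v + x) := by nlinarith
      have h3 : (0:ℝ) < (u+x)*(v+x) := by positivity
      rw [Real.norm_eq_abs, abs_of_nonneg (by positivity)]
      calc x ^ γ / ((u + x) * (v + x)) ≤ 1 / (u*v) :=
            div_le_div₀ zero_le_one h1 (by positivity) h2
        _ = (u*v)⁻¹ := one_div _
  · apply Integrable.mono' (g := fun x => x ^ (γ - 2))
    · exact integrableOn_Ioi_rpow_of_lt (by linarith) one_pos
    · exact (contOn_ker hu hv _ (Ioi_subset_Ioi zero_le_one)).aestronglyMeasurable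
        measurableSet_Ioi
    · filter_upwards [ae_restrict_mem measurableSet_Ioi] with x hx
      have hx0 : (0:ℝ) < x := lt_trans one_pos hx
      have hxx : x ^ (γ - 2) = x ^ γ / (x * x) := by
        rw [Real.rpow_sub hx0, show (2:ℝ) = ((2:ℕ):ℝ) by norm_num, Real.rpow_natCast]
        ring_nf
      rw [Real.norm_eq_abs, abs_of_nonneg (by positivity), hxx]
      apply div_le_div_of_nonneg_left (by positivity) (by positivity)
      nlinarith

lemma integrableOn_ker2 {γ u : ℝ} (hγ0 : 0 < γ) (hγ1 : γ < 1) (hu : 0 < u) :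
    IntegrableOn (fun x : ℝ => x ^ (γ - 1) * (u / (u + x))) (Ioi 0) := by
  have hcont : ContinuousOn (fun x : ℝ => x ^ (γ-1) * (u / (u + x))) (Ioi 0) := by
    intro x hx
    have hx0 : (0:ℝ) < x := hx
    apply ContinuousWithinAt.mul
    · exact (Real.continuousAt_rpow_const x _ (Or.inl hx0.ne')).continuousWithinAt
    · exact ContinuousWithinAt.div continuousWithinAt_const
        (continuous_const.add continuous_id).continuousWithinAt (by positivity)
  have key : Ioc (0:ℝ) 1 ∪ Ioi 1 = Ioi 0 := Ioc_union_Ioi_eq_Ioi zero_le_one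
  rw [← key, integrableOn_union]
  constructor
  · apply Integrable.mono' (g := fun x => x ^ (γ - 1))
    · exact (intervalIntegrable_iff_integrableOn_Ioc_of_le zero_le_one).mp
        (intervalIntegral.intervalIntegrable_rpow' (by linarith))
    · exact (hcont.mono Ioc_subset_Ioi_self).aestronglyMeasurable measurableSet_Ioc
    · filter_upwards [ae_restrict_mem measurableSet_Ioc] with x hx
      have hx0 : (0:ℝ) < x := hx.1
      rw [Real.norm_eq_abs, abs_of_nonneg (by positivity)]
      have : u / (u + x) ≤ 1 := by
        rw [div_le_one (by positivity)]; linarith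
      nlinarith [Real.rpow_pos_of_pos hx0 (γ-1), div_nonneg hu.le (by positivity : (0:ℝ) ≤ u + x),
        Real.rpow_nonneg hx0.le (γ-1)]
  · apply Integrable.mono' (g := fun x => u * x ^ (γ - 2))
    · exact (integrableOn_Ioi_rpow_of_lt (by linarith) one_pos).const_mul u
    · exact (hcont.mono (Ioi_subset_Ioi zero_le_one)).aestronglyMeasurable measurableSet_Ioi
    · filter_upwards [ae_restrict_mem measurableSet_Ioi] with x hx
      have hx0 : (0:ℝ) < x := lt_trans one_pos hx
      rw [Real.norm_eq_abs, abs_of_nonneg (by positivity)]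
      have h1 : u / (u + x) ≤ u / x :=
        div_le_div_of_nonneg_left hu.le hx0 (by linarith)
      have h2 : x ^ (γ-1) * (u / x) = u * x ^ (γ - 2) := by
        rw [show γ - 2 = (γ - 1) - 1 by ring, Real.rpow_sub hx0 (γ-1) 1, Real.rpow_one]
        ring
      calc x ^ (γ-1) * (u / (u+x)) ≤ x ^ (γ-1) * (u / x) := by
            apply mul_le_mul_of_nonneg_left h1 (Real.rpow_nonneg hx0.le _)
        _ = u * x ^ (γ - 2) := h2

lemma integral_ker0_ne {u v : ℝ} (hu : 0 < u) (hv : 0 < v) (huv : u ≠ v) :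
    ∫ x in Ioi 0, ((u+x)*(v+x))⁻¹ = (Real.log u - Real.log v)/(u-v) := by
  have huv' : u - v ≠ 0 := sub_ne_zero.2 huv
  have hderiv : ∀ x ∈ Ici (0:ℝ), HasDerivAt
      (fun x => (Real.log (v+x) - Real.log (u+x))/(u-v)) (((u+x)*(v+x))⁻¹) x := by
    intro x hx
    have hx0 : (0:ℝ) ≤ x := hx
    have h1 : HasDerivAt (fun x : ℝ => Real.log (v+x)) (1/(v+x)) x :=
      ((hasDerivAt_id x).const_add v).log (by positivity)
    have h2 : HasDerivAt (fun x : ℝ => Real.log (u+x)) (1/(u+x)) x :=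
      ((hasDerivAt_id x).const_add u).log (by positivity)
    have := (h1.sub h2).div_const (u-v)
    refine HasDerivAt.congr_deriv this ?_
    field_simp
    ring
  have htend : Tendsto (fun x => (Real.log (v+x) - Real.log (u+x))/(u-v)) atTop (𝓝 0) := by
    have l0 : Tendsto (fun x : ℝ => u + x) atTop atTop :=
      tendsto_atTop_add_const_left _ u tendsto_id
    have l1 : Tendsto (fun x : ℝ => (v+x)/(u+x)) atTop (𝓝 1) := by
      have l2 : Tendsto (fun x : ℝ => 1 + (v-u)/(u+x)) atTop (𝓝 (1 + 0)) :=
        tendsto_const_nhds.add (l0.const_div_atTop (v-u))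
      rw [add_zero] at l2
      apply l2.congr'
      filter_upwards [eventually_gt_atTop 0] with x hx
      have : u + x ≠ 0 := by positivity
      field_simp
      ring
    have l3 : Tendsto (fun x : ℝ => Real.log ((v+x)/(u+x))) atTop (𝓝 0) := by
      have := (Real.continuousAt_log one_ne_zero).tendsto.comp l1
      simpa [Function.comp_def] using this
    have l4 : Tendsto (fun x : ℝ => Real.log (v+x) - Real.log (u+x)) atTop (𝓝 0) := by
      apply l3.congr'
      filter_upwards [eventually_gt_atTop 0] with x hx
      rw [Real.log_div (by positivity) (by positivity)]
    simpa using l4.div_const (u-v)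
  have := integral_Ioi_of_hasDerivAt_of_tendsto' hderiv
    ((integrableOn_ker le_rfl one_pos hu hv).congr_fun
      (fun x hx => by
        beta_reduce
        rw [Real.rpow_zero]
        rw [one_div]
        ) measurableSet_Ioi) htend
  rw [this]
  simp
  field_simp
  ring

lemma integral_ker0_eq {u : ℝ} (hu : 0 < u) :
    ∫ x in Ioi 0, ((u+x)*(u+x))⁻¹ = u⁻¹ := by
  have hderiv : ∀ x ∈ Ici (0:ℝ), HasDerivAt (fun x => -(u+x)⁻¹) (((u+x)*(u+x))⁻¹) x := by
    intro x hx
    have hx0 : (0:ℝ) ≤ x := hx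
    have h1 : HasDerivAt (fun x : ℝ => (u+x)⁻¹) (-1/(u+x)^2) x :=
      ((hasDerivAt_id x).const_add u).inv (by positivity)
    refine HasDerivAt.congr_deriv h1.neg ?_
    field_simp
  have htend : Tendsto (fun x : ℝ => -(u+x)⁻¹) atTop (𝓝 0) := by
    have := (tendsto_atTop_add_const_left _ u (tendsto_id (α := ℝ))).inv_tendsto_atTop.neg
    simpa using this
  have := integral_Ioi_of_hasDerivAt_of_tendsto' hderiv
    ((integrableOn_ker le_rfl one_pos hu hu).congr_fun
      (fun x hx => by beta_reduce; rw [Real.rpow_zero, one_div]) measurableSet_Ioi) htend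
  rw [this]
  simp

lemma integral_rescale {γ u : ℝ} (hγ0 : 0 < γ) (hγ1 : γ < 1) (hu : 0 < u) :
    ∫ x in Ioi 0, x ^ (γ-1) * (u/(u+x)) =
      u ^ γ * ∫ x in Ioi 0, x ^ (γ-1) * (1/(1+x)) := by
  have h := integral_comp_mul_left_Ioi (fun x => x ^ (γ-1) * (1/(1+x))) 0
    (inv_pos.2 hu)
  rw [mul_zero] at h
  have key : ∀ x ∈ Ioi (0:ℝ), (u⁻¹ * x) ^ (γ-1) * (1/(1+u⁻¹*x)) =
      u ^ (1-γ) * (x ^ (γ-1) * (u/(u+x))) := by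
    intro x hx
    have hx0 : (0:ℝ) < x := hx
    have h1 : (1:ℝ)/(1+u⁻¹*x) = u/(u+x) := by
      rw [div_eq_div_iff (by positivity) (by positivity)]
      field_simp
    rw [h1, Real.mul_rpow (by positivity) hx0.le, ← Real.rpow_neg_one u,
      ← Real.rpow_mul hu.le, show (-1:ℝ) * ((γ-1) : ℝ) = 1 - γ by ring]
    ring
  rw [setIntegral_congr_fun measurableSet_Ioi key] at h
  rw [MeasureTheory.integral_const_mul] at h
  rw [smul_eq_mul, inv_inv] at h
  have hne : u ^ (1-γ) ≠ 0 := (Real.rpow_pos_of_pos hu _).ne'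
  have : ∫ x in Ioi 0, x ^ (γ-1) * (u/(u+x)) =
      u / u ^ (1-γ) * ∫ x in Ioi 0, x ^ (γ-1) * (1/(1+x)) := by
    rw [div_mul_eq_mul_div, eq_div_iff hne, ← h]
    ring
  rw [this, eq_comm]
  congr 1
  rw [eq_div_iff hne, ← Real.rpow_add hu]
  norm_num

lemma integral_ker_ne {γ u v : ℝ} (hγ0 : 0 < γ) (hγ1 : γ < 1) (hu : 0 < u) (hv : 0 < v)
    (huv : u ≠ v) :
    ∫ x in Ioi 0, x ^ γ / ((u+x)*(v+x)) =
      (∫ x in Ioi 0, x ^ (γ-1) * (1/(1+x))) * ((u ^ γ - v ^ γ)/(u-v)) := by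
  have huv' : u - v ≠ 0 := sub_ne_zero.2 huv
  have key : ∀ x ∈ Ioi (0:ℝ), x ^ γ / ((u+x)*(v+x)) =
      (x ^ (γ-1) * (u/(u+x)) - x ^ (γ-1) * (v/(v+x))) / (u-v) := by
    intro x hx
    have hx0 : (0:ℝ) < x := hx
    have hxγ : x ^ (γ-1) * x = x ^ γ := by
      rw [← Real.rpow_add_one hx0.ne']
      norm_num
    rw [div_eq_div_iff (by positivity) huv']
    field_simp
    nlinarith [hxγ]
  rw [setIntegral_congr_fun measurableSet_Ioi key, integral_div,
    integral_sub (integrableOn_ker2 hγ0 hγ1 hu) (integrableOn_ker2 hγ0 hγ1 hv),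
    integral_rescale hγ0 hγ1 hu, integral_rescale hγ0 hγ1 hv]
  ring

lemma integral_J {γ : ℝ} (hγ0 : 0 < γ) (hγ1 : γ < 1) :
    ∫ x in Ioi 0, x ^ γ / ((1+x)*(1+x)) =
      γ * ∫ x in Ioi 0, x ^ (γ-1) * (1/(1+x)) := by
  set G : ℝ → ℝ := fun x => -(x ^ γ / (1+x)) with hG
  have hderiv : ∀ x ∈ Ioi (0:ℝ), HasDerivAt G
      (x ^ γ / ((1+x)*(1+x)) - γ * (x ^ (γ-1) * (1/(1+x)))) x := by
    intro x hx
    have hx0 : (0:ℝ) < x := hx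
    have hp : HasDerivAt (fun x : ℝ => x ^ γ) (γ * x ^ (γ-1)) x :=
      Real.hasDerivAt_rpow_const (Or.inl hx0.ne')
    have hq : HasDerivAt (fun x : ℝ => 1 + x) 1 x := (hasDerivAt_id x).const_add 1
    have h2 := (hp.div hq (by positivity)).neg
    refine HasDerivAt.congr_deriv h2 ?_
    have hxγ : x ^ (γ-1) * x = x ^ γ := by
      rw [← Real.rpow_add_one hx0.ne']; norm_num
    field_simp
    nlinarith [hxγ]
  have hcont : ContinuousWithinAt G (Ici 0) 0 := by
    apply ContinuousWithinAt.neg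
    apply ContinuousWithinAt.div
    · exact (Real.continuousAt_rpow_const 0 γ (Or.inr hγ0.le)).continuousWithinAt
    · exact (continuous_const.add continuous_id).continuousWithinAt
    · norm_num
  have htend : Tendsto G atTop (𝓝 0) := by
    rw [show (0:ℝ) = -0 by norm_num]
    apply Tendsto.neg
    apply tendsto_of_tendsto_of_tendsto_of_le_of_le'
      (tendsto_const_nhds (x := (0:ℝ))) (tendsto_rpow_neg_atTop (by linarith : 0 < 1 - γ) |>.congr
        (fun x => by rw [show -(1-γ) = γ - 1 by ring]))
    · filter_upwards [eventually_gt_atTop 0] with x hx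
      positivity
    · filter_upwards [eventually_gt_atTop 0] with x hx
      have hxγ : x ^ (γ-1) * x = x ^ γ := by
        rw [← Real.rpow_add_one hx.ne']; norm_num
      rw [div_le_iff₀ (by positivity), ← hxγ]
      have : (0:ℝ) < x ^ (γ-1) := Real.rpow_pos_of_pos hx _
      nlinarith
  have hint : IntegrableOn
      (fun x => x ^ γ / ((1+x)*(1+x)) - γ * (x ^ (γ-1) * (1/(1+x)))) (Ioi 0) := by
    exact (integrableOn_ker hγ0.le hγ1 one_pos one_pos).sub
      ((integrableOn_ker2 hγ0 hγ1 one_pos).const_mul γ)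
  have heval := integral_Ioi_of_hasDerivAt_of_tendsto hcont hderiv hint htend
  have hG0 : G 0 = 0 := by
    simp [hG, Real.zero_rpow hγ0.ne']
  rw [hG0, sub_zero] at heval
  rw [integral_sub (integrableOn_ker hγ0.le hγ1 one_pos one_pos)
    ((integrableOn_ker2 hγ0 hγ1 one_pos).const_mul γ)] at heval
  rw [MeasureTheory.integral_const_mul] at heval
  linarith [heval]

lemma integral_ker_eq {γ u : ℝ} (hγ0 : 0 < γ) (hγ1 : γ < 1) (hu : 0 < u) :
    ∫ x in Ioi 0, x ^ γ / ((u+x)*(u+x)) =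
      (∫ x in Ioi 0, x ^ (γ-1) * (1/(1+x))) * (γ * u ^ (γ-1)) := by
  have h := integral_comp_mul_left_Ioi (fun x => x ^ γ / ((1+x)*(1+x))) 0 (inv_pos.2 hu)
  rw [mul_zero] at h
  have key : ∀ x ∈ Ioi (0:ℝ), (u⁻¹ * x) ^ γ / ((1+u⁻¹*x)*(1+u⁻¹*x)) =
      u ^ (2-γ) * (x ^ γ / ((u+x)*(u+x))) := by
    intro x hx
    have hx0 : (0:ℝ) < x := hx
    have h1 : (1:ℝ)+u⁻¹*x = (u+x)/u := by field_simp
    rw [h1, Real.mul_rpow (by positivity) hx0.le, ← Real.rpow_neg_one u,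
      ← Real.rpow_mul hu.le]
    have h2 : u ^ ((2:ℝ)-γ) = u ^ ((-1:ℝ)*γ) * (u*u) := by
      rw [show ((2:ℝ)-γ) = (-1)*γ + 2 by ring, Real.rpow_add hu,
        show (2:ℝ) = ((2:ℕ):ℝ) by norm_num, Real.rpow_natCast]
      ring
    rw [h2]
    have h3 : ((u+x)/u) * ((u+x)/u) = (u+x)*(u+x)/(u*u) := by ring
    rw [h3]
    rw [div_div_eq_mul_div]
    ring
  rw [setIntegral_congr_fun measurableSet_Ioi key, MeasureTheory.integral_const_mul,
    smul_eq_mul, inv_inv, integral_J hγ0 hγ1] at h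
  have hne : u ^ ((2:ℝ)-γ) ≠ 0 := (Real.rpow_pos_of_pos hu _).ne'
  have h4 : u ^ (γ-1) * u ^ ((2:ℝ)-γ) = u := by
    rw [← Real.rpow_add hu, show (γ-1) + ((2:ℝ)-γ) = 1 by ring, Real.rpow_one]
  have h5 := congrArg (fun z => u ^ (γ-1) * z) h
  rw [← mul_assoc, h4] at h5
  have h6 : ∫ x in Ioi 0, x ^ γ / ((u+x)*(u+x)) =
      u ^ (γ-1) * (γ * ∫ x in Ioi 0, x ^ (γ-1) * (1/(1+x))) := by
    apply mul_left_cancel₀ (ne_of_gt hu)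
    rw [h5]
    ring
  rw [h6]
  ring

lemma C_pos {γ : ℝ} (hγ0 : 0 < γ) (hγ1 : γ < 1) :
    0 < ∫ x in Ioi (0:ℝ), x ^ (γ-1) * (1/(1+x)) := by
  rw [setIntegral_pos_iff_support_of_nonneg_ae]
  · have hsub : Ioi (0:ℝ) ⊆ Function.support (fun x : ℝ => x ^ (γ-1) * (1/(1+x))) := by
      intro x hx
      have hx0 : (0:ℝ) < x := hx
      have : (0:ℝ) < x ^ (γ-1) * (1/(1+x)) := by positivity
      exact fun hzero => this.ne' hzero
    have : Function.support (fun x : ℝ => x ^ (γ-1) * (1/(1+x))) ∩ Ioi 0 = Ioi 0 :=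
      inter_eq_self_of_subset_right hsub
    rw [this, Real.volume_Ioi]
    norm_num
  · filter_upwards [ae_restrict_mem measurableSet_Ioi] with x hx
    have hx0 : (0:ℝ) < x := hx
    positivity
  · exact integrableOn_ker2 hγ0 hγ1 one_pos

lemma gram_posSemidef {n : ℕ} (f : Fin n → ℝ → ℝ)
    (hint : ∀ i j, IntegrableOn (fun x => f i x * f j x) (Ioi 0)) :
    Matrix.PosSemidef (Matrix.of fun i j => (∫ x in Ioi 0, f i x * f j x : ℝ)) := by
  refine Matrix.PosSemidef.of_dotProduct_mulVec_nonneg ?_ ?_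
  · ext i j
    simp only [Matrix.conjTranspose_apply, Matrix.of_apply, star_trivial]
    congr 1
    ext x
    ring
  · intro y
    have key : (star y) ⬝ᵥ (Matrix.of fun i j => (∫ x in Ioi 0, f i x * f j x : ℝ)).mulVec y
        = ∫ x in Ioi 0, (∑ i, y i * f i x) ^ 2 := by
      have hpt : ∀ x : ℝ, (∑ i, y i * f i x) ^ 2
          = ∑ i, ∑ j, (y i * y j) * (f i x * f j x) := by
        intro x
        rw [sq, Finset.sum_mul_sum]
        apply Finset.sum_congr rfl
        intro i _
        apply Finset.sum_congr rfl
        intro j _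
        ring
      have hint2 : ∀ i j, Integrable (fun x => (y i * y j) * (f i x * f j x))
          (volume.restrict (Ioi 0)) := fun i j => (hint i j).const_mul _
      rw [show (fun x => (∑ i, y i * f i x) ^ 2)
          = fun x => ∑ i, ∑ j, (y i * y j) * (f i x * f j x) from funext hpt]
      rw [MeasureTheory.integral_finset_sum _ (fun i _ =>
        MeasureTheory.integrable_finset_sum _ (fun j _ => hint2 i j))]
      have : ∀ i, ∫ x in Ioi 0, ∑ j, (y i * y j) * (f i x * f j x)
          = ∑ j, (y i * y j) * ∫ x in Ioi 0, f i x * f j x := by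
        intro i
        rw [MeasureTheory.integral_finset_sum _ (fun j _ => hint2 i j)]
        exact Finset.sum_congr rfl fun j _ => MeasureTheory.integral_const_mul _ _
      simp only [this]
      simp only [dotProduct, Matrix.mulVec, Matrix.of_apply, star_trivial,
        Finset.mul_sum, dotProduct]
      apply Finset.sum_congr rfl
      intro i _
      apply Finset.sum_congr rfl
      intro j _
      ring
    rw [key]
    exact integral_nonneg (fun x => sq_nonneg _)

lemma posSemidef_map_complex {n : ℕ} {A : Matrix (Fin n) (Fin n) ℝ} (h : A.PosSemidef) :
    Matrix.PosSemidef (A.map (fun r => (r : ℂ))) := by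
  obtain ⟨B, rfl⟩ : ∃ B : Matrix (Fin n) (Fin n) ℝ, A = Bᴴ * B := by
    open scoped MatrixOrder in
    obtain ⟨X, hX, -, rfl⟩ := CFC.exists_sqrt_of_isSelfAdjoint_of_quasispectrumRestricts
      h.isHermitian (QuasispectrumRestricts.nnreal_of_nonneg h.nonneg)
    refine ⟨X, ?_⟩
    rw [← Matrix.star_eq_conjTranspose]
    simp only [hX.star_eq]
  have : (Bᴴ * B).map (fun r => (r:ℂ)) = (B.map (fun r => (r:ℂ)))ᴴ * (B.map fun r => (r:ℂ)) := by
    rw [← Matrix.conjTranspose_map (fun r : ℝ => (r:ℂ))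
      (fun r => by simp [Complex.conj_ofReal])]
    exact Matrix.map_mul (f := Complex.ofRealHom)
  rw [this]
  exact Matrix.posSemidef_conjTranspose_mul_self _

lemma exp_sub_exp (a b : ℝ) :
    Real.exp a - Real.exp b = 2 * Real.exp ((a+b)/2) * Real.sinh ((a-b)/2) := by
  have h1 : (a+b)/2 + (a-b)/2 = a := by ring
  have h2 : (a+b)/2 + -((a-b)/2) = b := by ring
  rw [Real.sinh_eq,
    show 2 * Real.exp ((a+b)/2) * ((Real.exp ((a-b)/2) - Real.exp (-((a-b)/2)))/2)
      = Real.exp ((a+b)/2) * Real.exp ((a-b)/2)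
        - Real.exp ((a+b)/2) * Real.exp (-((a-b)/2)) by ring,
    ← Real.exp_add, ← Real.exp_add, h1, h2]

lemma sqrt_exp' (a : ℝ) : Real.sqrt (Real.exp a) = Real.exp (a/2) := by
  rw [show Real.exp a = Real.exp (a/2) * Real.exp (a/2) by
      rw [← Real.exp_add]; ring_nf,
    Real.sqrt_mul_self (Real.exp_pos _).le]

lemma exp_rpow' (a p : ℝ) : (Real.exp a) ^ p = Real.exp (a * p) := by
  rw [Real.rpow_def_of_pos (Real.exp_pos a), Real.log_exp]

lemma exp_ne_one {t : ℝ} (ht : t ≠ 0) : Real.exp t ≠ 1 := by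
  rw [← Real.exp_zero, Ne, Real.exp_eq_exp]
  exact ht

lemma tendsto_sinh_div (c : ℝ) :
    Tendsto (fun t => Real.sinh (c*t) / t) (𝓝[≠] (0:ℝ)) (𝓝 c) := by
  have hd : HasDerivAt (fun t : ℝ => Real.sinh (c*t)) c 0 := by
    have h1 : HasDerivAt (fun t : ℝ => c * t) c 0 := by
      simpa using (hasDerivAt_id (0:ℝ)).const_mul c
    have h2 := (Real.hasDerivAt_sinh (c*0)).comp 0 h1
    simpa [Function.comp_def] using h2
  have h3 := hasDerivAt_iff_tendsto_slope.mp hd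
  apply h3.congr'
  filter_upwards [self_mem_nhdsWithin] with t ht
  rw [slope_def_field]
  simp [Real.sinh_zero]

lemma Hmean_exp {c t : ℝ} (hc : c ≠ 0) (ht : t ≠ 0) :
    Hmean c (Real.exp t) 1 = c * (Real.exp t - 1) / Real.sinh (c*t) := by
  rw [Hmean, if_neg (exp_ne_one ht), if_neg hc, mul_one, exp_rpow', Real.one_rpow]
  have h4 : (Real.exp (t*c) + 1) * (Real.exp (t*c) - 1)
      = 2 * Real.exp (t*c) * Real.sinh (c*t) := by
    have h5 := exp_sub_exp (2*(t*c)) 0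
    rw [Real.exp_zero] at h5
    calc (Real.exp (t*c)+1)*(Real.exp (t*c)-1)
        = Real.exp (t*c) * Real.exp (t*c) - 1 := by ring
      _ = Real.exp (2*(t*c)) - 1 := by rw [← Real.exp_add]; ring_nf
      _ = 2 * Real.exp (t*c) * Real.sinh (c*t) := by
          rw [h5, show (2*(t*c)+0)/2 = t*c by ring, show (2*(t*c)-0)/2 = c*t by ring]
  rw [h4]
  have h5 : Real.sinh (c*t) ≠ 0 := Real.sinh_ne_zero.2 (mul_ne_zero hc ht)
  have h6 : Real.exp (t*c) ≠ 0 := (Real.exp_pos _).ne'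
  field_simp

lemma Hmean_zero_exp {t : ℝ} (ht : t ≠ 0) :
    Hmean 0 (Real.exp t) 1 = (Real.exp t - 1)/t := by
  rw [Hmean, if_neg (exp_ne_one ht), if_pos rfl, LM, if_neg (exp_ne_one ht),
    Real.log_exp, Real.log_one, sub_zero]

lemma main_zero {β : ℝ} (hβ0 : 0 < β) (φ : ℝ → ℝ) (hφ0 : φ 0 = 1)
    (hφ : ∀ t : ℝ, t ≠ 0 → φ t = β * t / Real.sinh (β * t)) : IsPosDefFun φ := by
  have hs : ∀ t : ℝ, t ≠ 0 → Real.sinh (β*t) ≠ 0 :=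
    fun t ht => Real.sinh_ne_zero.2 (mul_ne_zero hβ0.ne' ht)
  constructor
  · rw [continuous_iff_continuousAt]
    intro t0
    by_cases ht0 : t0 = 0
    · subst ht0
      rw [ContinuousAt, hφ0, ← nhdsNE_sup_pure (0:ℝ), tendsto_sup]
      constructor
      · have l1 : Tendsto (fun t => β / (Real.sinh (β*t)/t)) (𝓝[≠] (0:ℝ)) (𝓝 (β/β)) :=
          tendsto_const_nhds.div (tendsto_sinh_div β) hβ0.ne'
        rw [div_self hβ0.ne'] at l1
        apply l1.congr'
        filter_upwards [self_mem_nhdsWithin] with t ht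
        rw [div_div_eq_mul_div, hφ t ht]
      · simpa [hφ0] using tendsto_pure_nhds φ 0
    · have hc : ContinuousAt (fun t => β*t/Real.sinh (β*t)) t0 := by
        apply ContinuousAt.div
        · fun_prop
        · fun_prop
        · exact hs t0 ht0
      apply hc.congr
      filter_upwards [isOpen_compl_singleton.mem_nhds ht0] with t ht
      exact (hφ t ht).symm
  · intro n t
    set u : Fin n → ℝ := fun i => Real.exp (2*β*t i) with hu
    have hupos : ∀ i, 0 < u i := fun i => Real.exp_pos _
    set f : Fin n → ℝ → ℝ := fun i x => Real.sqrt (u i) / (u i + x) with hf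
    have hint : ∀ i j, IntegrableOn (fun x => f i x * f j x) (Ioi 0) := by
      intro i j
      have base : IntegrableOn
          (fun x : ℝ => Real.sqrt (u i) * Real.sqrt (u j) * (x ^ (0:ℝ) / ((u i + x) * (u j + x))))
          (Ioi 0) :=
        (integrableOn_ker (γ := 0) le_rfl one_pos (hupos i) (hupos j)).const_mul _
      apply base.congr_fun ?_ measurableSet_Ioi
      intro x hx
      have hx0 : (0:ℝ) < x := hx
      have h1 : u i + x ≠ 0 := by positivity
      have h2 : u j + x ≠ 0 := by positivity
      simp only [hf, Real.rpow_zero]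
      field_simp
    have hprod : ∀ i j, ∫ x in Ioi 0, f i x * f j x
        = Real.sqrt (u i) * Real.sqrt (u j) * ∫ x in Ioi 0, ((u i + x)*(u j + x))⁻¹ := by
      intro i j
      rw [← MeasureTheory.integral_const_mul]
      apply setIntegral_congr_fun measurableSet_Ioi
      intro x hx
      rw [hf]
      simp only
      rw [div_mul_div_comm, div_eq_mul_inv]
    have key : ∀ i j, φ (t i - t j) = ∫ x in Ioi 0, f i x * f j x := by
      intro i j
      by_cases hij : t i = t j
      · have huij : u i = u j := by rw [hu]; simp [hij]
        rw [hij, sub_self, hφ0, hprod, huij, integral_ker0_eq (hupos j),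
          Real.mul_self_sqrt (hupos j).le, mul_inv_cancel₀ (hupos j).ne']
      · have hij' : t i - t j ≠ 0 := sub_ne_zero.2 hij
        have huij : u i ≠ u j := by
          simp only [hu, Ne, Real.exp_eq_exp]
          intro h
          exact hij (mul_left_cancel₀ (by positivity : (2:ℝ)*β ≠ 0) h)
        rw [hφ _ hij', hprod, integral_ker0_ne (hupos i) (hupos j) huij]
        have hs1 : Real.sqrt (u i) * Real.sqrt (u j) = Real.exp (β*(t i + t j)) := by
          rw [hu]
          simp only
          rw [sqrt_exp', sqrt_exp', ← Real.exp_add]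
          congr 1
          ring
        have hlogi : Real.log (u i) = 2*β*t i := Real.log_exp _
        have hlogj : Real.log (u j) = 2*β*t j := Real.log_exp _
        have hsub : u i - u j
            = 2 * Real.exp (β*(t i + t j)) * Real.sinh (β*(t i - t j)) := by
          rw [hu]
          simp only
          rw [exp_sub_exp]
          congr 2 <;> ring
        rw [hs1, hlogi, hlogj, hsub]
        have hsinh := hs _ hij'
        rw [show β * (t i - t j) = β * t i - β * t j by ring] at *
        have hexp : Real.exp (β*(t i + t j)) ≠ 0 := (Real.exp_pos _).ne'
        field_simp
    have heq : (Matrix.of fun i j : Fin n => (φ (t i - t j) : ℂ)) =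
        (Matrix.of fun i j => (∫ x in Ioi 0, f i x * f j x : ℝ)).map (fun r => (r:ℂ)) := by
      ext i j
      simp [key i j]
    rw [heq]
    exact posSemidef_map_complex (gram_posSemidef f hint)

lemma main_pos {α β : ℝ} (hα0 : 0 < α) (hαβ : α < β) (φ : ℝ → ℝ) (hφ0 : φ 0 = 1)
    (hφ : ∀ t : ℝ, t ≠ 0 → φ t = β * Real.sinh (α*t) / (α * Real.sinh (β*t))) :
    IsPosDefFun φ := by
  have hβ0 : 0 < β := hα0.trans hαβ
  have hs : ∀ t : ℝ, t ≠ 0 → Real.sinh (β*t) ≠ 0 :=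
    fun t ht => Real.sinh_ne_zero.2 (mul_ne_zero hβ0.ne' ht)
  set γ : ℝ := α/β with hγ
  have hγ0 : 0 < γ := div_pos hα0 hβ0
  have hγ1 : γ < 1 := (div_lt_one hβ0).2 hαβ
  set C : ℝ := ∫ x in Ioi (0:ℝ), x ^ (γ-1) * (1/(1+x)) with hC
  have hCpos : 0 < C := C_pos hγ0 hγ1
  set c : ℝ := β/(α*C) with hc
  have hcpos : 0 < c := by positivity
  constructor
  · rw [continuous_iff_continuousAt]
    intro t0
    by_cases ht0 : t0 = 0
    · subst ht0
      rw [ContinuousAt, hφ0, ← nhdsNE_sup_pure (0:ℝ), tendsto_sup]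
      constructor
      · have l1 : Tendsto (fun t => (β/α) * ((Real.sinh (α*t)/t) / (Real.sinh (β*t)/t)))
            (𝓝[≠] (0:ℝ)) (𝓝 ((β/α) * (α/β))) :=
          (((tendsto_sinh_div α).div (tendsto_sinh_div β) hβ0.ne').const_mul (β/α))
        rw [show (β/α) * (α/β) = 1 by field_simp] at l1
        apply l1.congr'
        filter_upwards [self_mem_nhdsWithin] with t ht
        rw [hφ t ht]
        have e : Real.sinh (α*t)/t / (Real.sinh (β*t)/t) = Real.sinh (α*t) / Real.sinh (β*t) := by
          rw [div_div_div_comm, div_self (show (t:ℝ) ≠ 0 from ht), div_one]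
        rw [e, div_mul_div_comm]
      · simpa [hφ0] using tendsto_pure_nhds φ 0
    · have hcont : ContinuousAt (fun t => β * Real.sinh (α*t) / (α * Real.sinh (β*t))) t0 := by
        apply ContinuousAt.div
        · fun_prop
        · fun_prop
        · exact mul_ne_zero hα0.ne' (hs t0 ht0)
      apply hcont.congr
      filter_upwards [isOpen_compl_singleton.mem_nhds ht0] with t ht
      exact (hφ t ht).symm
  · intro n t
    set u : Fin n → ℝ := fun i => Real.exp (2*β*t i) with hu
    have hupos : ∀ i, 0 < u i := fun i => Real.exp_pos _
    set f : Fin n → ℝ → ℝ :=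
      fun i x => Real.sqrt c * ((u i) ^ ((1-γ)/2) * x ^ (γ/2) / (u i + x)) with hf
    have hpt : ∀ i j, ∀ x ∈ Ioi (0:ℝ),
        c * ((u i) ^ ((1-γ)/2) * (u j) ^ ((1-γ)/2)) * (x ^ γ / ((u i + x)*(u j + x)))
          = f i x * f j x := by
      intro i j x hx
      have hx0 : (0:ℝ) < x := hx
      have h1 : u i + x ≠ 0 := by positivity
      have h2 : u j + x ≠ 0 := by positivity
      simp only [hf]
      generalize hsc : Real.sqrt c = sc
      generalize hX : x ^ (γ/2) = X
      have hcc : sc * sc = c := by rw [← hsc]; exact Real.mul_self_sqrt hcpos.le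
      have hxγ2 : X * X = x ^ γ := by rw [← hX, ← Real.rpow_add hx0]; norm_num
      rw [← hcc, ← hxγ2]
      generalize u i ^ ((1-γ)/2) = A
      generalize u j ^ ((1-γ)/2) = B
      field_simp
    have hint : ∀ i j, IntegrableOn (fun x => f i x * f j x) (Ioi 0) := by
      intro i j
      have base : IntegrableOn
          (fun x : ℝ => c * ((u i) ^ ((1-γ)/2) * (u j) ^ ((1-γ)/2))
            * (x ^ γ / ((u i + x) * (u j + x)))) (Ioi 0) :=
        (integrableOn_ker hγ0.le hγ1 (hupos i) (hupos j)).const_mul _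
      exact base.congr_fun (hpt i j) measurableSet_Ioi
    have hprod : ∀ i j, ∫ x in Ioi 0, f i x * f j x
        = c * ((u i) ^ ((1-γ)/2) * (u j) ^ ((1-γ)/2))
            * ∫ x in Ioi 0, x ^ γ / ((u i + x)*(u j + x)) := by
      intro i j
      rw [← MeasureTheory.integral_const_mul]
      exact (setIntegral_congr_fun measurableSet_Ioi (hpt i j)).symm
    have key : ∀ i j, φ (t i - t j) = ∫ x in Ioi 0, f i x * f j x := by
      intro i j
      by_cases hij : t i = t j
      · have huij : u i = u j := by rw [hu]; simp [hij]
        rw [hij, sub_self, hφ0, hprod, huij, integral_ker_eq hγ0 hγ1 (hupos j)]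
        have e1 : u j ^ ((1-γ)/2) * u j ^ ((1-γ)/2) = u j ^ (1-γ) := by
          rw [← Real.rpow_add (hupos j)]; norm_num
        rw [e1, ← hC]
        have e2 : u j ^ (1-γ) * u j ^ (γ-1) = 1 := by
          rw [← Real.rpow_add (hupos j), show (1-γ) + (γ-1) = 0 by ring, Real.rpow_zero]
        have e4 : β/(α*C)*C*γ = 1 := by
          rw [hγ]
          field_simp [hα0.ne', hβ0.ne', hCpos.ne']
        calc (1:ℝ) = β/(α*C)*C*γ * (u j ^ (1-γ) * u j ^ (γ-1)) := by rw [e2, mul_one, e4]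
          _ = c * u j ^ (1-γ) * (C * (γ * u j ^ (γ-1))) := by rw [hc]; ring
      · have hij' : t i - t j ≠ 0 := sub_ne_zero.2 hij
        have huij : u i ≠ u j := by
          simp only [hu, Ne, Real.exp_eq_exp]
          intro h
          exact hij (mul_left_cancel₀ (by positivity : (2:ℝ)*β ≠ 0) h)
        rw [hφ _ hij', hprod, integral_ker_ne hγ0 hγ1 (hupos i) (hupos j) huij, ← hC]
        have eγ : ∀ i : Fin n, u i ^ γ = Real.exp (2*α*t i) := by
          intro i
          rw [hu]
          simp only
          rw [exp_rpow']
          congr 1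
          rw [hγ]
          field_simp
        have ep : ∀ i : Fin n, u i ^ ((1-γ)/2) = Real.exp ((β-α)*t i) := by
          intro i
          rw [hu]
          simp only
          rw [exp_rpow']
          congr 1
          rw [hγ]
          field_simp
        have hsubγ : u i ^ γ - u j ^ γ
            = 2 * Real.exp (α*(t i + t j)) * Real.sinh (α*(t i - t j)) := by
          rw [eγ i, eγ j, exp_sub_exp]
          congr 2 <;> ring
        have hsub : u i - u j
            = 2 * Real.exp (β*(t i + t j)) * Real.sinh (β*(t i - t j)) := by
          rw [hu]
          simp only
          rw [exp_sub_exp]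
          congr 2 <;> ring
        rw [hsubγ, hsub, ep i, ep j, hc]
        have hsinh : Real.sinh (β*(t i - t j)) ≠ 0 := hs _ hij'
        have he1 : Real.exp ((β-α)*t i) * Real.exp ((β-α)*t j)
            * Real.exp (α*(t i + t j)) = Real.exp (β*(t i + t j)) := by
          rw [← Real.exp_add, ← Real.exp_add]
          congr 1
          ring
        have hexpβ : Real.exp (β*(t i + t j)) ≠ 0 := (Real.exp_pos _).ne'
        rw [show β * (t i - t j) = β * t i - β * t j by ring] at *
        rw [show α * (t i - t j) = α * t i - α * t j by ring] at *
        field_simp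
        have he1' : Real.exp (t i * (β-α)) * Real.exp (t j * (β-α)) * Real.exp (α*(t i + t j))
            = Real.exp (β*(t i + t j)) := by
          rw [mul_comm (t i), mul_comm (t j)]; exact he1
        linear_combination (-1 : ℝ) * he1'
    have heq : (Matrix.of fun i j : Fin n => (φ (t i - t j) : ℂ)) =
        (Matrix.of fun i j => (∫ x in Ioi 0, f i x * f j x : ℝ)).map (fun r => (r:ℂ)) := by
      ext i j
      simp [key i j]
    rw [heq]
    exact posSemidef_map_complex (gram_posSemidef f hint)

/-- If `0 ≤ α < β ≤ 1`, the function `t ↦ H_β(eᵗ,1)/H_α(eᵗ,1)` (with value `1` at `t = 0`)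
is positive definite. -/
theorem statement0 (α β : ℝ) (hα : 0 ≤ α) (hαβ : α < β) (hβ : β ≤ 1)
    (φ : ℝ → ℝ) (hφ0 : φ 0 = 1)
    (hφ : ∀ t : ℝ, t ≠ 0 →
      φ t = Hmean β (Real.exp t) 1 / Hmean α (Real.exp t) 1) :
    IsPosDefFun φ := by
  have hβ0 : 0 < β := lt_of_le_of_lt hα hαβ
  rcases eq_or_lt_of_le hα with hα0 | hα0
  · apply main_zero hβ0 φ hφ0
    intro t ht
    rw [hφ t ht, Hmean_exp hβ0.ne' ht, ← hα0, Hmean_zero_exp ht]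
    have h1 : Real.exp t - 1 ≠ 0 := sub_ne_zero.2 (exp_ne_one ht)
    have h2 : Real.sinh (β*t) ≠ 0 := Real.sinh_ne_zero.2 (mul_ne_zero hβ0.ne' ht)
    field_simp
  · apply main_pos hα0 hαβ φ hφ0
    intro t ht
    rw [hφ t ht, Hmean_exp hβ0.ne' ht, Hmean_exp hα0.ne' ht]
    have h1 : Real.exp t - 1 ≠ 0 := sub_ne_zero.2 (exp_ne_one ht)
    have h2 : Real.sinh (β*t) ≠ 0 := Real.sinh_ne_zero.2 (mul_ne_zero hβ0.ne' ht)
    have h3 : Real.sinh (α*t) ≠ 0 := Real.sinh_ne_zero.2 (mul_ne_zero hα0.ne' ht)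
    field_simp
end

section
/- Let 0 ≤ α < β ≤ 2. Then the function φ : ℝ → ℝ defined by φ(t) = G_β(e^{2t}, 1) / G_α(e^{2t}, 1) for t ≠ 0 and φ(0) = 1 is positive definite. (Explicitly, for 0 < α < β one has φ(t) = (β/α)·sinh(αt)/sinh(βt) for t ≠ 0.) -/
open scoped ComplexOrder

/-! ### Auxiliary positive semidefiniteness lemmas -/

section Auxiliary

open Filter Topology Matrix Complex

variable {n : ℕ}

private lemma sum4_comm {ι : Type*} [Fintype ι] {M : Type*} [AddCommMonoid M]
    (f : ι → ι → ι → ι → M) :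
    ∑ a, ∑ b, ∑ c, ∑ d, f a b c d = ∑ d, ∑ c, ∑ b, ∑ a, f a b c d :=
  calc ∑ a, ∑ b, ∑ c, ∑ d, f a b c d
      = ∑ a, ∑ b, ∑ d, ∑ c, f a b c d :=
        Finset.sum_congr rfl fun _ _ => Finset.sum_congr rfl fun _ _ => Finset.sum_comm
    _ = ∑ a, ∑ d, ∑ b, ∑ c, f a b c d :=
        Finset.sum_congr rfl fun _ _ => Finset.sum_comm
    _ = ∑ d, ∑ a, ∑ b, ∑ c, f a b c d := Finset.sum_comm
    _ = ∑ d, ∑ a, ∑ c, ∑ b, f a b c d :=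
        Finset.sum_congr rfl fun _ _ => Finset.sum_congr rfl fun _ _ => Finset.sum_comm
    _ = ∑ d, ∑ c, ∑ a, ∑ b, f a b c d :=
        Finset.sum_congr rfl fun _ _ => Finset.sum_comm
    _ = ∑ d, ∑ c, ∑ b, ∑ a, f a b c d :=
        Finset.sum_congr rfl fun _ _ => Finset.sum_congr rfl fun _ _ => Finset.sum_comm

private lemma psd_rankOne (v : Fin n → ℂ) :
    (Matrix.of fun i j : Fin n => v i * star (v j)).PosSemidef := by
  rw [Matrix.posSemidef_iff_dotProduct_mulVec]
  constructor
  · ext i j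
    simp [Matrix.conjTranspose_apply, star_mul', mul_comm]
  · intro x
    have hkey : star x ⬝ᵥ ((Matrix.of fun i j : Fin n => v i * star (v j)) *ᵥ x)
        = star (∑ j, star (v j) * x j) * (∑ j, star (v j) * x j) := by
      simp only [dotProduct, Matrix.mulVec, Matrix.of_apply, Pi.star_apply,
        star_sum, star_mul', star_star, Finset.mul_sum, Finset.sum_mul]
      rw [Finset.sum_comm]
      exact Finset.sum_congr rfl fun i _ => Finset.sum_congr rfl fun j _ => by ring
    rw [hkey]
    exact star_mul_self_nonneg _

private lemma psd_schur {A C : Matrix (Fin n) (Fin n) ℂ}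
    (hA : A.PosSemidef) (hC : C.PosSemidef) :
    (Matrix.of fun i j : Fin n => A i j * C i j).PosSemidef := by
  obtain ⟨B, hB⟩ : ∃ B : Matrix (Fin n) (Fin n) ℂ, A = Bᴴ * B :=
    by open scoped MatrixOrder in exact CStarAlgebra.nonneg_iff_eq_star_mul_self.mp hA.nonneg
  obtain ⟨D, hD⟩ : ∃ D : Matrix (Fin n) (Fin n) ℂ, C = Dᴴ * D :=
    by open scoped MatrixOrder in exact CStarAlgebra.nonneg_iff_eq_star_mul_self.mp hC.nonneg
  rw [Matrix.posSemidef_iff_dotProduct_mulVec]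
  constructor
  · ext i j
    simp only [Matrix.conjTranspose_apply, Matrix.of_apply, star_mul', hA.1.apply, hC.1.apply,
      mul_comm]
  · intro x
    have hkey : star x ⬝ᵥ ((Matrix.of fun i j : Fin n => A i j * C i j) *ᵥ x)
        = ∑ k, ∑ l, star (∑ j, B k j * D l j * x j) * (∑ j, B k j * D l j * x j) := by
      subst hB hD
      simp only [dotProduct, Matrix.mulVec, Matrix.of_apply, Pi.star_apply,
        Matrix.mul_apply, Matrix.conjTranspose_apply, star_sum, star_mul', star_star,
        Finset.sum_mul, Finset.mul_sum]
      exact (sum4_comm _).trans <| Finset.sum_congr rfl fun k _ =>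
        Finset.sum_congr rfl fun l _ => Finset.sum_congr rfl fun j _ =>
        Finset.sum_congr rfl fun i _ => by ring
    rw [hkey]
    exact Finset.sum_nonneg fun k _ => Finset.sum_nonneg fun l _ => star_mul_self_nonneg _

private lemma psd_of_tendsto {M : ℕ → Matrix (Fin n) (Fin n) ℂ} {A : Matrix (Fin n) (Fin n) ℂ}
    (hM : ∀ N, (M N).PosSemidef)
    (h : ∀ i j, Tendsto (fun N => M N i j) atTop (𝓝 (A i j))) : A.PosSemidef := by
  rw [Matrix.posSemidef_iff_dotProduct_mulVec]
  constructor
  · ext i j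
    have h1 : Tendsto (fun N => star (M N j i)) atTop (𝓝 (star (A j i))) :=
      (continuous_star.tendsto _).comp (h j i)
    have h2 : ∀ N, star (M N j i) = M N i j := fun N => (hM N).1.apply i j
    simp only [Matrix.conjTranspose_apply]
    exact tendsto_nhds_unique (h1.congr h2) (h i j)
  · intro x
    have hq : Tendsto (fun N => star x ⬝ᵥ (M N *ᵥ x)) atTop (𝓝 (star x ⬝ᵥ (A *ᵥ x))) := by
      simp only [dotProduct, Matrix.mulVec]
      exact tendsto_finset_sum _ fun i _ => tendsto_const_nhds.mul
        (tendsto_finset_sum _ fun j _ => (h i j).mul tendsto_const_nhds)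
    exact le_of_tendsto_of_tendsto tendsto_const_nhds hq
      (Eventually.of_forall fun N => (hM N).dotProduct_mulVec_nonneg x)

private lemma psd_ones : (Matrix.of fun _ _ : Fin n => (1:ℂ)).PosSemidef := by
  have := psd_rankOne (fun _ : Fin n => (1:ℂ))
  simpa using this

private lemma psd_smul {A : Matrix (Fin n) (Fin n) ℂ} (hA : A.PosSemidef) {c : ℝ} (hc : 0 ≤ c) :
    (Matrix.of fun i j : Fin n => (c:ℂ) * A i j).PosSemidef := by
  rw [Matrix.posSemidef_iff_dotProduct_mulVec]
  constructor
  · ext i j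
    simp only [Matrix.conjTranspose_apply, Matrix.of_apply, star_mul', hA.1.apply]
    simp [mul_comm]
  · intro x
    have hkey : star x ⬝ᵥ ((Matrix.of fun i j : Fin n => (c:ℂ) * A i j) *ᵥ x)
        = (c:ℂ) * (star x ⬝ᵥ (A *ᵥ x)) := by
      simp only [dotProduct, Matrix.mulVec, Matrix.of_apply, Finset.mul_sum]
      exact Finset.sum_congr rfl fun i _ => Finset.sum_congr rfl fun j _ => by ring
    rw [hkey]
    exact mul_nonneg (by exact_mod_cast Complex.zero_le_real.mpr hc) (hA.dotProduct_mulVec_nonneg x)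

private lemma psd_sum {ι : Type*} (s : Finset ι) (F : ι → Matrix (Fin n) (Fin n) ℂ)
    (h : ∀ k ∈ s, (F k).PosSemidef) : (∑ k ∈ s, F k).PosSemidef :=
  Finset.sum_induction F _ (fun _ _ ha hb => ha.add hb) Matrix.PosSemidef.zero h

private lemma psd_cauchy (t : Fin n → ℝ) :
    (Matrix.of fun i j : Fin n => ((1:ℂ) + Complex.I * ((t i : ℂ) - (t j : ℂ)))⁻¹).PosSemidef := by
  set d : Fin n → ℂ := fun i => 3/2 + Complex.I * (t i) with hd
  have hdne : ∀ i, d i ≠ 0 := by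
    intro i h
    have := congrArg Complex.re h
    simp [hd] at this
  set w : Fin n → ℂ := fun i => (1/2 - Complex.I * (t i)) / d i with hw
  have hdstar : ∀ j, star (d j) = 3/2 - Complex.I * (t j) := by
    intro j
    rw [hd]
    apply Complex.ext <;> simp
  have hdstarne : ∀ j, (3/2 : ℂ) - Complex.I * (t j) ≠ 0 := by
    intro j h
    have := congrArg Complex.re h
    simp at this
  have hwstar : ∀ j, star (w j) = (1/2 + Complex.I * (t j)) / (3/2 - Complex.I * (t j)) := by
    intro j
    rw [hw]
    rw [star_div₀, hdstar]
    congr 1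
    apply Complex.ext <;> simp
  have hwnorm : ∀ i, ‖w i‖ < 1 := by
    intro i
    have h1 : ‖w i‖^2 < 1 := by
      have he : ‖w i‖^2 = normSq (1/2 - Complex.I * (t i)) / normSq (d i) := by
        rw [hw, norm_div, div_pow,
          Complex.sq_norm, Complex.sq_norm]
      rw [he, hd]
      have h2 : normSq (1/2 - Complex.I * (t i)) = 1/4 + (t i)^2 := by
        simp [Complex.normSq_apply]; ring
      have h3 : normSq (3/2 + Complex.I * (t i)) = 9/4 + (t i)^2 := by
        simp [Complex.normSq_apply]; ring
      rw [h2, h3, div_lt_one (by positivity)]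
      nlinarith [sq_nonneg (t i)]
    nlinarith [norm_nonneg (w i)]
  have hrnorm : ∀ i j, ‖w i * star (w j)‖ < 1 := by
    intro i j
    rw [norm_mul, norm_star]
    nlinarith [norm_nonneg (w i), norm_nonneg (w j), hwnorm i, hwnorm j]
  have hsubne : ∀ i j, (1 : ℂ) - w i * star (w j) ≠ 0 := by
    intro i j h
    have h1 : w i * star (w j) = 1 := by linear_combination -h
    have := hrnorm i j
    rw [h1] at this
    simp at this
  have honene : ∀ i j : Fin n, ((1:ℂ) + Complex.I * ((t i : ℂ) - (t j : ℂ))) ≠ 0 := by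
    intro i j h
    have := congrArg Complex.re h
    simp at this
  have hprod : ∀ i j, (d i * star (d j)) * (1 - w i * star (w j))
      = 2 * ((1:ℂ) + Complex.I * ((t i : ℂ) - (t j : ℂ))) := by
    intro i j
    have e1 : w i * d i = 1/2 - Complex.I * (t i) := by
      rw [hw]; exact div_mul_cancel₀ _ (hdne i)
    have e2 : star (w j) * (3/2 - Complex.I * (t j)) = 1/2 + Complex.I * (t j) := by
      rw [hwstar]; exact div_mul_cancel₀ _ (hdstarne j)
    have e3 : (d i * star (d j)) * (1 - w i * star (w j))
        = d i * star (d j) - (w i * d i) * (star (w j) * star (d j)) := by ring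
    rw [e3, hdstar, e1, e2]
    simp only [hd]
    ring
  have hkey : ∀ i j, (d i * star (d j))⁻¹ * (1 - w i * star (w j))⁻¹
      = ((1:ℝ)/2 : ℂ) * ((1:ℂ) + Complex.I * ((t i : ℂ) - (t j : ℂ)))⁻¹ := by
    intro i j
    rw [← mul_inv, hprod i j, mul_inv]
    push_cast
    norm_num
  have hhalf : (Matrix.of fun i j : Fin n =>
      ((1:ℝ)/2 : ℂ) * ((1:ℂ) + Complex.I * ((t i : ℂ) - (t j : ℂ)))⁻¹).PosSemidef := by
    apply psd_of_tendsto (M := fun N => ∑ k ∈ Finset.range N,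
      Matrix.of fun i j : Fin n => ((w i)^k / d i) * star ((w j)^k / d j))
    · intro N
      exact psd_sum _ _ fun k _ => psd_rankOne _
    · intro i j
      have hsum : ∀ N, (∑ k ∈ Finset.range N,
          Matrix.of fun i j : Fin n => ((w i)^k / d i) * star ((w j)^k / d j)) i j
          = (d i * star (d j))⁻¹ * ∑ k ∈ Finset.range N, (w i * star (w j))^k := by
        intro N
        rw [Matrix.sum_apply, Finset.mul_sum]
        refine Finset.sum_congr rfl fun k _ => ?_
        simp only [Matrix.of_apply, star_div₀, star_pow, mul_pow, mul_inv]
        ring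
      have hgeo : Tendsto (fun N => ∑ k ∈ Finset.range N, (w i * star (w j))^k) atTop
          (𝓝 (1 - w i * star (w j))⁻¹) :=
        (hasSum_geometric_of_norm_lt_one (hrnorm i j)).tendsto_sum_nat
      have hlim := hgeo.const_mul ((d i * star (d j))⁻¹)
      simp only [Matrix.of_apply]
      rw [← hkey i j]
      exact Tendsto.congr (fun N => (hsum N).symm) hlim
  have heq : (Matrix.of fun i j : Fin n => ((1:ℂ) + Complex.I * ((t i : ℂ) - (t j : ℂ)))⁻¹)
      = Matrix.of fun i j : Fin n => ((2:ℝ) : ℂ) *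
        (Matrix.of fun i j : Fin n =>
          ((1:ℝ)/2 : ℂ) * ((1:ℂ) + Complex.I * ((t i : ℂ) - (t j : ℂ)))⁻¹) i j := by
    ext i j
    simp only [Matrix.of_apply]
    push_cast
    ring
  rw [heq]
  exact psd_smul hhalf (by norm_num)

private lemma cauchy_entry_aux (e : ℝ) : (((1/(1+e^2) : ℝ)) : ℂ)
    = ((1:ℝ)/2 : ℂ) * (((1:ℂ) + Complex.I*e)⁻¹ + ((1:ℂ) - Complex.I*e)⁻¹) := by
  have h1 : ((1:ℂ) + Complex.I*e) ≠ 0 := by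
    intro h; have := congrArg Complex.re h; simp at this
  have h2 : ((1:ℂ) - Complex.I*e) ≠ 0 := by
    intro h; have := congrArg Complex.re h; simp at this
  have key : ((1:ℂ)+Complex.I*e)*(1-Complex.I*e) = ((1+e^2 : ℝ):ℂ) := by
    push_cast
    linear_combination (-(e:ℂ)^2) * Complex.I_sq
  have h3 : ((1+e^2 : ℝ):ℂ) ≠ 0 := by
    rw [Complex.ofReal_ne_zero]; positivity
  rw [inv_add_inv h1 h2, key]
  have h4 : ((1:ℂ) + Complex.I*e) + ((1:ℂ) - Complex.I*e) = 2 := by ring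
  rw [h4]
  push_cast
  ring

/-- The Cauchy kernel matrix `γ²/(γ² + (tᵢ - tⱼ)²)` is PSD. -/
private lemma psd_K (t : Fin n → ℝ) (γ : ℝ) (hγ : 0 < γ) :
    (Matrix.of fun i j : Fin n => ((γ^2/(γ^2 + (t i - t j)^2) : ℝ) : ℂ)).PosSemidef := by
  set s : Fin n → ℝ := fun i => t i / γ with hs
  have hC := psd_cauchy s
  have hCT := hC.transpose
  have hsum := hC.add hCT
  have hfin := psd_smul hsum (c := 1/2) (by norm_num)
  have heq : (Matrix.of fun i j : Fin n => ((γ^2/(γ^2 + (t i - t j)^2) : ℝ) : ℂ))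
      = Matrix.of fun i j : Fin n => ((1/2 : ℝ) : ℂ) *
        (((Matrix.of fun i j : Fin n => ((1:ℂ) + Complex.I * ((s i : ℂ) - (s j : ℂ)))⁻¹)
          + (Matrix.of fun i j : Fin n => ((1:ℂ) + Complex.I * ((s i : ℂ) - (s j : ℂ)))⁻¹)ᵀ) i j)
      := by
    ext i j
    simp only [Matrix.of_apply, Matrix.add_apply, Matrix.transpose_apply]
    have hγne : γ ≠ 0 := ne_of_gt hγ
    have hd : (t i - t j) = γ * (s i - s j) := by
      simp only [hs]; field_simp
    have hreal : γ^2/(γ^2 + (t i - t j)^2) = 1/(1 + (s i - s j)^2) := by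
      rw [hd]
      have hne : (1 : ℝ) + (s i - s j)^2 ≠ 0 := by positivity
      field_simp
    rw [hreal, cauchy_entry_aux (s i - s j)]
    push_cast
    ring
  rw [heq]
  exact hfin

private lemma psd_factor (t : Fin n → ℝ) {α β c : ℝ} (hα : 0 ≤ α) (hαβ : α < β) (hc : 0 < c) :
    (Matrix.of fun i j : Fin n =>
      (((1 + α^2*(t i - t j)^2/c) / (1 + β^2*(t i - t j)^2/c) : ℝ) : ℂ)).PosSemidef := by
  have hβ : 0 < β := lt_of_le_of_lt hα hαβ
  set γ := Real.sqrt c / β with hγdef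
  have hγ : 0 < γ := div_pos (Real.sqrt_pos.2 hc) hβ
  have hγ2 : γ^2 = c/β^2 := by rw [hγdef, div_pow, Real.sq_sqrt hc.le]
  have hs1 := psd_smul (psd_ones (n := n)) (c := α^2/β^2) (by positivity)
  have hs2 := psd_smul (psd_K t γ hγ) (c := (β^2-α^2)/β^2)
    (by apply div_nonneg _ (by positivity); nlinarith)
  have hadd := hs1.add hs2
  have heq : (Matrix.of fun i j : Fin n =>
      (((1 + α^2*(t i - t j)^2/c) / (1 + β^2*(t i - t j)^2/c) : ℝ) : ℂ))
      = (Matrix.of fun i j : Fin n => ((α^2/β^2 : ℝ) : ℂ) *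
          (Matrix.of fun _ _ : Fin n => (1:ℂ)) i j)
        + (Matrix.of fun i j : Fin n => (((β^2-α^2)/β^2 : ℝ) : ℂ) *
          (Matrix.of fun i j : Fin n => ((γ^2/(γ^2 + (t i - t j)^2) : ℝ) : ℂ)) i j) := by
    ext i j
    simp only [Matrix.add_apply, Matrix.of_apply, mul_one]
    have hreal : (1 + α^2*(t i - t j)^2/c) / (1 + β^2*(t i - t j)^2/c)
        = α^2/β^2 + ((β^2-α^2)/β^2) * (γ^2/(γ^2 + (t i - t j)^2)) := by
      rw [hγ2]
      have h1 : (1 : ℝ) + β^2*(t i - t j)^2/c ≠ 0 := by positivity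
      have h2 : c/β^2 + (t i - t j)^2 ≠ 0 := by positivity
      field_simp
      ring
    rw [hreal]
    push_cast
    ring
  rw [heq]
  exact hadd

private lemma psd_prod (F : ℕ → Matrix (Fin n) (Fin n) ℂ) (h : ∀ k, (F k).PosSemidef) (N : ℕ) :
    (Matrix.of fun i j : Fin n => ∏ k ∈ Finset.range N, F k i j).PosSemidef := by
  induction N with
  | zero => simpa using psd_ones (n := n)
  | succ N ih =>
    have hs := psd_schur ih (h N)
    have heq : (Matrix.of fun i j : Fin n => ∏ k ∈ Finset.range (N+1), F k i j)
        = Matrix.of fun i j : Fin n =>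
            (Matrix.of fun i j : Fin n => ∏ k ∈ Finset.range N, F k i j) i j * F N i j := by
      ext i j
      simp [Finset.prod_range_succ]
    rw [heq]
    exact hs

private lemma euler_lim {γ s : ℝ} (hγ : γ ≠ 0) (hs : s ≠ 0) :
    Filter.Tendsto (fun N : ℕ => ∏ k ∈ Finset.range N,
      ((1 + γ^2*s^2/(((k:ℝ)+1)^2*Real.pi^2) : ℝ) : ℂ)) Filter.atTop
      (𝓝 ((Real.sinh (γ*s)/(γ*s) : ℝ) : ℂ)) := by
  set z : ℂ := ((γ*s/Real.pi : ℝ) : ℂ) * Complex.I with hz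
  have hπ : (Real.pi : ℂ) ≠ 0 := Complex.ofReal_ne_zero.2 Real.pi_ne_zero
  have hπz : (Real.pi : ℂ) * z = ((γ*s : ℝ) : ℂ) * Complex.I := by
    rw [hz]; push_cast; field_simp
  have hπzne : ((γ*s : ℝ) : ℂ) * Complex.I ≠ 0 :=
    mul_ne_zero (Complex.ofReal_ne_zero.2 (mul_ne_zero hγ hs)) Complex.I_ne_zero
  have hz2 : z^2 = -(((γ^2*s^2/Real.pi^2 : ℝ)) : ℂ) := by
    rw [hz, mul_pow, Complex.I_sq]; push_cast; field_simp
  have hterm : ∀ N : ℕ, ∏ k ∈ Finset.range N, ((1:ℂ) - z^2/((k:ℂ)+1)^2)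
      = ∏ k ∈ Finset.range N, ((1 + γ^2*s^2/(((k:ℝ)+1)^2*Real.pi^2) : ℝ) : ℂ) := by
    intro N
    refine Finset.prod_congr rfl fun k _ => ?_
    rw [hz2]
    have hk : ((k:ℂ)+1) ≠ 0 := Nat.cast_add_one_ne_zero k
    have hk' : ((k:ℝ)+1) ≠ 0 := by positivity
    push_cast
    field_simp
    ring
  have hsin : Complex.sin ((Real.pi : ℂ) * z) = ((Real.sinh (γ*s) : ℝ) : ℂ) * Complex.I := by
    rw [hπz, Complex.sin_mul_I, Complex.ofReal_sinh]
  have h := Complex.tendsto_euler_sin_prod z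
  rw [hsin] at h
  have h2 := h.const_mul ((((γ*s : ℝ) : ℂ) * Complex.I)⁻¹)
  have h3 : Filter.Tendsto (fun N : ℕ => ∏ k ∈ Finset.range N, ((1:ℂ) - z^2/((k:ℂ)+1)^2))
      Filter.atTop
      (𝓝 ((((γ*s : ℝ) : ℂ) * Complex.I)⁻¹ * (((Real.sinh (γ*s) : ℝ) : ℂ) * Complex.I))) := by
    refine h2.congr fun N => ?_
    rw [hπz, inv_mul_cancel_left₀ hπzne]
  have hval : (((γ*s : ℝ) : ℂ) * Complex.I)⁻¹ * (((Real.sinh (γ*s) : ℝ) : ℂ) * Complex.I)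
      = ((Real.sinh (γ*s)/(γ*s) : ℝ) : ℂ) := by
    have : ((γ*s : ℝ) : ℂ) ≠ 0 := Complex.ofReal_ne_zero.2 (mul_ne_zero hγ hs)
    push_cast
    field_simp [Complex.I_ne_zero]
  rw [hval] at h3
  exact h3.congr hterm

private lemma exp_two_ne_one {s : ℝ} (hs : s ≠ 0) : Real.exp (2*s) ≠ 1 := by
  rw [Ne, Real.exp_eq_one_iff]
  intro h
  exact hs (by linarith)

private lemma gmean_exp {γ s : ℝ} (hγ : γ ≠ 0) (hs : s ≠ 0) :
    Gmean γ (Real.exp (2*s)) 1 = γ * (Real.exp (2*s) - 1) / (2 * Real.sinh (γ*s)) := by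
  rw [Gmean, if_neg (exp_two_ne_one hs), if_neg hγ]
  rw [mul_one, Real.one_rpow]
  rw [Real.rpow_def_of_pos (Real.exp_pos _), Real.log_exp]
  rw [Real.rpow_def_of_pos (Real.exp_pos _), Real.log_exp]
  have h1 : Real.exp (2*s*(γ/2)) * Real.exp (γ*s) = Real.exp (2*s*γ) := by
    rw [← Real.exp_add]; ring_nf
  have h2 : Real.exp (2*s*(γ/2)) * Real.exp (-(γ*s)) = 1 := by
    rw [← Real.exp_add]
    have harg : 2*s*(γ/2) + -(γ*s) = 0 := by ring
    rw [harg, Real.exp_zero]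
  have hkey : Real.exp (2*s*γ) - 1 = Real.exp (2*s*(γ/2)) * (2 * Real.sinh (γ*s)) := by
    rw [Real.sinh_eq, ← h1, ← h2]
    ring
  rw [hkey]
  have he : Real.exp (2*s*(γ/2)) ≠ 0 := Real.exp_ne_zero _
  have hsh : Real.sinh (γ*s) ≠ 0 := Real.sinh_ne_zero.2 (mul_ne_zero hγ hs)
  field_simp

private lemma phi_closed {α β s : ℝ} (hα : 0 ≤ α) (hαβ : α < β) (hs : s ≠ 0) :
    Gmean β (Real.exp (2*s)) 1 / Gmean α (Real.exp (2*s)) 1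
    = (if α = 0 then 1 else Real.sinh (α*s)/(α*s)) / (Real.sinh (β*s)/(β*s)) := by
  have hβ : 0 < β := lt_of_le_of_lt hα hαβ
  have hβs : β*s ≠ 0 := mul_ne_zero hβ.ne' hs
  have hshβ : Real.sinh (β*s) ≠ 0 := Real.sinh_ne_zero.2 hβs
  have hX : Real.exp (2*s) - 1 ≠ 0 := sub_ne_zero.2 (exp_two_ne_one hs)
  rw [gmean_exp hβ.ne' hs]
  rcases eq_or_ne α 0 with h0 | h0
  · rw [if_pos h0, h0, Gmean, if_neg (exp_two_ne_one hs), if_pos rfl, LM,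
      if_neg (exp_two_ne_one hs), Real.log_exp, Real.log_one]
    field_simp
    ring
  · rw [if_neg h0, gmean_exp h0 hs]
    have hαs : α*s ≠ 0 := mul_ne_zero h0 hs
    have hshα : Real.sinh (α*s) ≠ 0 := Real.sinh_ne_zero.2 hαs
    field_simp

private lemma sinh_div_lim {γ : ℝ} (hγ : γ ≠ 0) :
    Filter.Tendsto (fun s : ℝ => Real.sinh (γ*s)/(γ*s)) (𝓝[≠] (0:ℝ)) (𝓝 1) := by
  have hd : HasDerivAt Real.sinh 1 0 := by
    simpa [Real.cosh_zero] using Real.hasDerivAt_sinh 0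
  rw [hasDerivAt_iff_tendsto_slope] at hd
  have hmul : Filter.Tendsto (fun s : ℝ => γ*s) (𝓝[≠] (0:ℝ)) (𝓝[≠] (0:ℝ)) := by
    rw [tendsto_nhdsWithin_iff]
    constructor
    · have : Filter.Tendsto (fun s : ℝ => γ*s) (𝓝 (0:ℝ)) (𝓝 (γ*0)) :=
        (continuous_const.mul continuous_id).tendsto 0
      rw [mul_zero] at this
      exact this.mono_left nhdsWithin_le_nhds
    · filter_upwards [self_mem_nhdsWithin] with s hs
      exact mul_ne_zero hγ hs
  have := hd.comp hmul
  refine this.congr fun s => ?_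
  simp [slope_def_field, Real.sinh_zero]

private lemma phi_cont {α β : ℝ} (hα : 0 ≤ α) (hαβ : α < β) {φ : ℝ → ℝ} (hφ0 : φ 0 = 1)
    (hform : ∀ s : ℝ, s ≠ 0 →
      φ s = (if α = 0 then 1 else Real.sinh (α*s)/(α*s)) / (Real.sinh (β*s)/(β*s))) :
    Continuous φ := by
  have hβ : 0 < β := lt_of_le_of_lt hα hαβ
  set num : ℝ → ℝ := fun s => if α = 0 then 1 else Real.sinh (α*s)/(α*s) with hnum
  set den : ℝ → ℝ := fun s => Real.sinh (β*s)/(β*s) with hden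
  rw [continuous_iff_continuousAt]
  intro x
  rcases eq_or_ne x 0 with rfl | hx
  · rw [ContinuousAt, hφ0]
    rw [← nhdsNE_sup_pure 0, Filter.tendsto_sup]
    constructor
    · have hev : ∀ᶠ s in 𝓝[≠] (0:ℝ), num s / den s = φ s := by
        filter_upwards [self_mem_nhdsWithin] with s hs
        exact (hform s hs).symm
      have hnl : Filter.Tendsto num (𝓝[≠] (0:ℝ)) (𝓝 1) := by
        rcases eq_or_ne α 0 with h0 | h0
        · simp only [hnum, if_pos h0]
          exact tendsto_const_nhds
        · simp only [hnum, if_neg h0]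
          exact sinh_div_lim h0
      have hdl : Filter.Tendsto den (𝓝[≠] (0:ℝ)) (𝓝 1) := sinh_div_lim hβ.ne'
      have := hnl.div hdl one_ne_zero
      rw [div_one] at this
      exact this.congr' hev
    · have h1 : φ 0 = 1 := hφ0
      rw [← h1]
      exact tendsto_pure_nhds φ 0
  · have hev : ∀ᶠ s in 𝓝 x, num s / den s = φ s := by
      filter_upwards [eventually_ne_nhds hx] with s hs
      exact (hform s hs).symm
    have hc : ContinuousAt (fun s => num s / den s) x := by
      have hβx : β * x ≠ 0 := mul_ne_zero hβ.ne' hx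
      have hdenx : den x ≠ 0 := div_ne_zero (Real.sinh_ne_zero.2 hβx) hβx
      have hcden : ContinuousAt den x := by
        simp only [hden]
        exact (Real.continuous_sinh.comp (continuous_const.mul continuous_id)).continuousAt.div
          ((continuous_const.mul continuous_id).continuousAt) hβx
      have hcnum : ContinuousAt num x := by
        rcases eq_or_ne α 0 with h0 | h0
        · simp only [hnum, if_pos h0]
          exact continuousAt_const
        · simp only [hnum, if_neg h0]
          exact (Real.continuous_sinh.comp (continuous_const.mul continuous_id)).continuousAt.div
            ((continuous_const.mul continuous_id).continuousAt) (mul_ne_zero h0 hx)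
      exact hcnum.div hcden hdenx
    exact hc.congr hev

end Auxiliary

open Filter Topology

/-- If `0 ≤ α < β ≤ 2`, the function `t ↦ G_β(e^{2t},1)/G_α(e^{2t},1)` (with value `1` at
`t = 0`) is positive definite. -/
theorem statement1 (α β : ℝ) (hα : 0 ≤ α) (hαβ : α < β) (hβ : β ≤ 2)
    (φ : ℝ → ℝ) (hφ0 : φ 0 = 1)
    (hφ : ∀ t : ℝ, t ≠ 0 →
      φ t = Gmean β (Real.exp (2 * t)) 1 / Gmean α (Real.exp (2 * t)) 1) :
    IsPosDefFun φ := by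
  have hβ0 : 0 < β := lt_of_le_of_lt hα hαβ
  have hform : ∀ s : ℝ, s ≠ 0 →
      φ s = (if α = 0 then 1 else Real.sinh (α*s)/(α*s)) / (Real.sinh (β*s)/(β*s)) := by
    intro s hs
    rw [hφ s hs]
    exact phi_closed hα hαβ hs
  refine ⟨phi_cont hα hαβ hφ0 hform, fun n t => ?_⟩
  apply psd_of_tendsto (M := fun N => Matrix.of fun i j : Fin n =>
    ((∏ k ∈ Finset.range N,
      (1 + α^2*(t i - t j)^2/(((k:ℝ)+1)^2*Real.pi^2))
        / (1 + β^2*(t i - t j)^2/(((k:ℝ)+1)^2*Real.pi^2)) : ℝ) : ℂ))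
  · intro N
    have heq : (Matrix.of fun i j : Fin n =>
        ((∏ k ∈ Finset.range N,
          (1 + α^2*(t i - t j)^2/(((k:ℝ)+1)^2*Real.pi^2))
            / (1 + β^2*(t i - t j)^2/(((k:ℝ)+1)^2*Real.pi^2)) : ℝ) : ℂ))
        = Matrix.of fun i j : Fin n => ∏ k ∈ Finset.range N,
            (Matrix.of fun i j : Fin n =>
              (((1 + α^2*(t i - t j)^2/(((k:ℝ)+1)^2*Real.pi^2))
                / (1 + β^2*(t i - t j)^2/(((k:ℝ)+1)^2*Real.pi^2)) : ℝ) : ℂ)) i j := by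
      ext i j
      simp only [Matrix.of_apply]
      push_cast
      rfl
    rw [heq]
    exact psd_prod _ (fun k => psd_factor t hα hαβ (by positivity)) N
  · intro i j
    simp only [Matrix.of_apply]
    rcases eq_or_ne (t i - t j) 0 with h0 | h0
    · rw [h0, hφ0]
      have hone : ∀ N : ℕ, (∏ k ∈ Finset.range N,
          (1 + α^2*(0:ℝ)^2/(((k:ℝ)+1)^2*Real.pi^2))
            / (1 + β^2*(0:ℝ)^2/(((k:ℝ)+1)^2*Real.pi^2)) : ℝ) = 1 := by
        intro N
        apply Finset.prod_eq_one
        intro k _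
        norm_num
      simp only [hone]
      push_cast
      exact tendsto_const_nhds
    · set s := t i - t j with hsdef
      have hden := euler_lim hβ0.ne' h0
      have hdne : ((Real.sinh (β*s)/(β*s) : ℝ) : ℂ) ≠ 0 := by
        rw [Complex.ofReal_ne_zero]
        exact div_ne_zero (Real.sinh_ne_zero.2 (mul_ne_zero hβ0.ne' h0))
          (mul_ne_zero hβ0.ne' h0)
      have hnumlim : Filter.Tendsto (fun N : ℕ => ∏ k ∈ Finset.range N,
          ((1 + α^2*s^2/(((k:ℝ)+1)^2*Real.pi^2) : ℝ) : ℂ)) Filter.atTop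
          (𝓝 (((if α = 0 then 1 else Real.sinh (α*s)/(α*s) : ℝ)) : ℂ)) := by
        rcases eq_or_ne α 0 with hα0 | hα0
        · rw [if_pos hα0]
          have : ∀ N : ℕ, (∏ k ∈ Finset.range N,
              ((1 + α^2*s^2/(((k:ℝ)+1)^2*Real.pi^2) : ℝ) : ℂ)) = 1 := by
            intro N
            apply Finset.prod_eq_one
            intro k _
            rw [hα0]
            norm_num
          simp only [this]
          push_cast
          exact tendsto_const_nhds
        · rw [if_neg hα0]
          exact euler_lim hα0 h0
      have htend := hnumlim.div hden hdne
      have hphi : (φ s : ℂ) = (((if α = 0 then 1 else Real.sinh (α*s)/(α*s) : ℝ)) : ℂ)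
          / ((Real.sinh (β*s)/(β*s) : ℝ) : ℂ) := by
        rw [hform s h0]
        push_cast
        rfl
      rw [hphi]
      refine htend.congr fun N => ?_
      rw [Pi.div_apply, ← Finset.prod_div_distrib]
      push_cast
      rfl
end

section
/- Let α ∈ ℝ with 0 < |α| ≤ 1. Then the following three functions ℝ → ℝ are positive definite: (i) t ↦ 1/cosh(αt/2), which equals H_α(e^t,1)/G_α(e^t,1) for t ≠ 0; (ii) t ↦ (αt/2)/sinh(αt/2) for t ≠ 0, extended by 1 at t = 0, which equals G_α(e^t,1)/LM(e^t,1) for t ≠ 0; (iii) t ↦ tanh(αt/2)/(αt/2) for t ≠ 0, extended by 1 at t = 0, which equals LM(e^t,1)/A_α(e^t,1) for t ≠ 0. -/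
open scoped ComplexOrder

section Aux

open MeasureTheory Filter Real Set Matrix
open scoped Topology


/-- A matrix of integrals of rank-one kernels is positive semidefinite. -/
lemma rankOne_integral_psd {n : ℕ} (μ : Measure ℝ) (v : ℝ → Fin n → ℝ)
    (hint : ∀ i j, Integrable (fun s => v s i * v s j) μ) :
    (Matrix.of fun i j : Fin n => ∫ s, v s i * v s j ∂μ).PosSemidef := by
  rw [Matrix.posSemidef_iff_dotProduct_mulVec]
  constructor
  · ext i j
    simp only [Matrix.conjTranspose_apply, Matrix.of_apply, star_trivial]
    simp_rw [mul_comm]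
  · intro x
    have key : star x ⬝ᵥ (Matrix.of fun i j : Fin n => ∫ s, v s i * v s j ∂μ).mulVec x
        = ∫ s, (∑ i, x i * v s i) ^ 2 ∂μ := by
      have h1 : ∀ s : ℝ, (∑ i, x i * v s i) ^ 2
          = ∑ i, ∑ j, x i * x j * (v s i * v s j) := by
        intro s
        rw [sq, Finset.sum_mul_sum]
        refine Finset.sum_congr rfl fun i _ => Finset.sum_congr rfl fun j _ => by ring
      have hInt : ∀ i j : Fin n, Integrable (fun s => x i * x j * (v s i * v s j)) μ :=
        fun i j => (hint i j).const_mul _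
      simp_rw [h1]
      rw [integral_finset_sum _ (fun i _ => integrable_finset_sum _ (fun j _ => hInt i j))]
      simp_rw [integral_finset_sum _ (fun j _ => hInt _ j), integral_const_mul]
      simp only [dotProduct, Matrix.mulVec, Matrix.of_apply, star_trivial,
        dotProduct, Finset.mul_sum]
      refine Finset.sum_congr rfl fun i _ => Finset.sum_congr rfl fun j _ => by ring
    rw [key]
    exact integral_nonneg fun s => sq_nonneg _

open scoped MatrixOrder in
/-- Real psd matrices are psd as complex matrices. -/
lemma psd_ofReal {n : ℕ} {M : Matrix (Fin n) (Fin n) ℝ} (hM : M.PosSemidef) :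
    (Matrix.of fun i j : Fin n => (M i j : ℂ)).PosSemidef := by
  obtain ⟨B, hB⟩ := CStarAlgebra.nonneg_iff_eq_star_mul_self.mp hM.nonneg
  rw [Matrix.star_eq_conjTranspose] at hB
  subst hB
  have : (Matrix.of fun i j : Fin n => ((Bᴴ * B) i j : ℂ))
      = (B.map (Complex.ofReal))ᴴ * B.map (Complex.ofReal) := by
    ext i j
    simp [Matrix.mul_apply, Matrix.conjTranspose_apply, Matrix.map_apply]
  rw [this]
  exact Matrix.posSemidef_conjTranspose_mul_self _

lemma int_exp_neg {c : ℝ} (hc : 0 < c) :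
    ∫ s in Ioi (0:ℝ), Real.exp (-(c * s)) = 1 / c := by
  have hderiv : ∀ s ∈ Ici (0:ℝ),
      HasDerivAt (fun s : ℝ => -(c⁻¹ * Real.exp (-(c * s)))) (Real.exp (-(c * s))) s := by
    intro s _
    have h : HasDerivAt (fun s : ℝ => -(c * s)) (-c) s := by
      exact HasDerivAt.neg (f := fun y => c * y) (by simpa using (hasDerivAt_id s).const_mul c)
    have h2 := (h.exp.const_mul c⁻¹).neg
    refine h2.congr_deriv ?_
    field_simp
  have htend : Tendsto (fun s : ℝ => -(c⁻¹ * Real.exp (-(c * s)))) atTop (𝓝 0) := by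
    have : Tendsto (fun s : ℝ => Real.exp (-(c * s))) atTop (𝓝 0) := by
      apply Real.tendsto_exp_atBot.comp
      exact tendsto_neg_atTop_atBot.comp (tendsto_id.const_mul_atTop hc)
    simpa using (this.const_mul c⁻¹).neg
  have := integral_Ioi_of_hasDerivAt_of_nonneg' hderiv
    (fun s _ => (Real.exp_pos _).le) htend
  rw [this]
  simp [Real.exp_zero, one_div]

lemma exp_neg_hderiv {c : ℝ} (hc : 0 < c) : ∀ s ∈ Ici (0:ℝ),
    HasDerivAt (fun s : ℝ => -(c⁻¹ * Real.exp (-(c * s)))) (Real.exp (-(c * s))) s := by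
  intro s _
  have h : HasDerivAt (fun s : ℝ => -(c * s)) (-c) s := by
    exact HasDerivAt.neg (f := fun y => c * y) (by simpa using (hasDerivAt_id s).const_mul c)
  have h2 := (h.exp.const_mul c⁻¹).neg
  refine h2.congr_deriv ?_
  field_simp

-- integrability version
lemma intOn_exp_neg {c : ℝ} (hc : 0 < c) :
    IntegrableOn (fun s : ℝ => Real.exp (-(c * s))) (Ioi 0) := by
  refine integrableOn_Ioi_deriv_of_nonneg' (exp_neg_hderiv hc)
    (fun s _ => (Real.exp_pos _).le) (l := 0) ?_
  have : Tendsto (fun s : ℝ => Real.exp (-(c * s))) atTop (𝓝 0) :=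
    Real.tendsto_exp_atBot.comp (tendsto_neg_atTop_atBot.comp (tendsto_id.const_mul_atTop hc))
  simpa using (this.const_mul c⁻¹).neg

-- C2 : ∫ s exp(-(c s)) over Ioi 0 = 1/c²  (value + integrability)
lemma sexp_hderiv {c : ℝ} (hc : 0 < c) : ∀ s ∈ Ici (0:ℝ),
    HasDerivAt (fun s : ℝ => -((s / c + 1 / c ^ 2) * Real.exp (-(c * s))))
      (s * Real.exp (-(c * s))) s := by
  intro s _
  have h : HasDerivAt (fun s : ℝ => -(c * s)) (-c) s := by
    exact HasDerivAt.neg (f := fun y => c * y) (by simpa using (hasDerivAt_id s).const_mul c)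
  have h1 : HasDerivAt (fun s : ℝ => s / c + 1 / c ^ 2) (1 / c) s := by
    have h0 := (hasDerivAt_id s).div_const c
    simp only [id_eq] at h0
    exact h0.add_const _
  have h2 := ((h1.mul h.exp)).neg
  refine h2.congr_deriv ?_
  field_simp
  ring

lemma sexp_tendsto {c : ℝ} (hc : 0 < c) :
    Tendsto (fun s : ℝ => -((s / c + 1 / c ^ 2) * Real.exp (-(c * s)))) atTop (𝓝 0) := by
  have hcs : Tendsto (fun s : ℝ => c * s) atTop atTop := tendsto_id.const_mul_atTop hc
  have hexp : Tendsto (fun s : ℝ => Real.exp (-(c * s))) atTop (𝓝 0) :=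
    Real.tendsto_exp_atBot.comp (tendsto_neg_atTop_atBot.comp hcs)
  have hx : Tendsto (fun x : ℝ => x * Real.exp (-x)) atTop (𝓝 0) := by
    simpa using Real.tendsto_pow_mul_exp_neg_atTop_nhds_zero 1
  have hxe : Tendsto (fun s : ℝ => (c * s) * Real.exp (-(c * s))) atTop (𝓝 0) := hx.comp hcs
  have : Tendsto (fun s : ℝ => (s / c + 1 / c ^ 2) * Real.exp (-(c * s))) atTop (𝓝 0) := by
    have heq : ∀ s : ℝ, (s / c + 1 / c ^ 2) * Real.exp (-(c * s))
        = c⁻¹ * c⁻¹ * ((c * s) * Real.exp (-(c * s))) + c⁻¹ * c⁻¹ * Real.exp (-(c * s)) := by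
      intro s; field_simp
    simp_rw [heq]
    simpa using ((hxe.const_mul (c⁻¹ * c⁻¹)).add (hexp.const_mul (c⁻¹ * c⁻¹)))
  simpa using this.neg

lemma sexp_nonneg {c : ℝ} : ∀ s ∈ Ioi (0:ℝ), 0 ≤ s * Real.exp (-(c * s)) :=
  fun s hs => mul_nonneg (le_of_lt hs) (Real.exp_pos _).le

lemma int_sexp_neg {c : ℝ} (hc : 0 < c) :
    ∫ s in Ioi (0:ℝ), s * Real.exp (-(c * s)) = 1 / c ^ 2 := by
  rw [integral_Ioi_of_hasDerivAt_of_nonneg' (sexp_hderiv hc) sexp_nonneg (sexp_tendsto hc)]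
  simp [Real.exp_zero]

lemma intOn_sexp_neg {c : ℝ} (hc : 0 < c) :
    IntegrableOn (fun s : ℝ => s * Real.exp (-(c * s))) (Ioi 0) :=
  integrableOn_Ioi_deriv_of_nonneg' (sexp_hderiv hc) sexp_nonneg (sexp_tendsto hc)

-- C3
lemma inv2_hderiv {x y : ℝ} (hx : 0 < x) (hy : 0 < y) (hxy : x ≠ y) : ∀ s ∈ Ici (0:ℝ),
    HasDerivAt (fun s : ℝ => (x - y)⁻¹ * (Real.log (y + s) - Real.log (x + s)))
      (((x + s) * (y + s))⁻¹) s := by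
  intro s hs
  have hxs : (0:ℝ) < x + s := by have := hs.out; linarith
  have hys : (0:ℝ) < y + s := by have := hs.out; linarith
  have h1 : HasDerivAt (fun s : ℝ => Real.log (y + s)) ((y + s)⁻¹) s := by
    have := ((hasDerivAt_id s).const_add y).log hys.ne'
    simpa using this
  have h2 : HasDerivAt (fun s : ℝ => Real.log (x + s)) ((x + s)⁻¹) s := by
    have := ((hasDerivAt_id s).const_add x).log hxs.ne'
    simpa using this
  have h3 := ((h1.sub h2).const_mul ((x - y)⁻¹))
  refine h3.congr_deriv ?_
  have hne : x - y ≠ 0 := sub_ne_zero.mpr hxy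
  field_simp
  ring

lemma inv2_tendsto {x y : ℝ} (hx : 0 < x) (hy : 0 < y) :
    Tendsto (fun s : ℝ => (x - y)⁻¹ * (Real.log (y + s) - Real.log (x + s))) atTop (𝓝 0) := by
  have hratio : Tendsto (fun s : ℝ => (y + s) / (x + s)) atTop (𝓝 1) := by
    have h1 : Tendsto (fun s : ℝ => 1 + (y - x) / (x + s)) atTop (𝓝 1) := by
      have h2 : Tendsto (fun s : ℝ => (y - x) / (x + s)) atTop (𝓝 0) := by
        apply Tendsto.div_atTop tendsto_const_nhds
        exact tendsto_atTop_add_const_left _ _ tendsto_id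
      simpa using tendsto_const_nhds.add h2
    apply h1.congr'
    filter_upwards [eventually_gt_atTop (0:ℝ)] with s hs
    have hxs : x + s ≠ 0 := by positivity
    field_simp
    ring
  have hlog : Tendsto (fun s : ℝ => Real.log (y + s) - Real.log (x + s)) atTop (𝓝 0) := by
    have h3 : Tendsto (fun s : ℝ => Real.log ((y + s) / (x + s))) atTop (𝓝 0) := by
      have := (Real.continuousAt_log (one_ne_zero)).tendsto.comp hratio
      simpa [Function.comp_def] using this
    apply h3.congr'
    filter_upwards [eventually_gt_atTop (0:ℝ)] with s hs
    rw [Real.log_div (by positivity) (by positivity)]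
  simpa using hlog.const_mul ((x - y)⁻¹)

lemma inv2_nonneg {x y : ℝ} (hx : 0 < x) (hy : 0 < y) :
    ∀ s ∈ Ioi (0:ℝ), 0 ≤ ((x + s) * (y + s))⁻¹ := by
  intro s hs
  have := hs.out
  positivity

lemma int_inv2 {x y : ℝ} (hx : 0 < x) (hy : 0 < y) (hxy : x ≠ y) :
    ∫ s in Ioi (0:ℝ), ((x + s) * (y + s))⁻¹ = (Real.log x - Real.log y) / (x - y) := by
  rw [integral_Ioi_of_hasDerivAt_of_nonneg' (inv2_hderiv hx hy hxy) (inv2_nonneg hx hy)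
    (inv2_tendsto hx hy)]
  have hne : x - y ≠ 0 := sub_ne_zero.mpr hxy
  field_simp
  simp

lemma intOn_inv2 {x y : ℝ} (hx : 0 < x) (hy : 0 < y) (hxy : x ≠ y) :
    IntegrableOn (fun s : ℝ => ((x + s) * (y + s))⁻¹) (Ioi 0) :=
  integrableOn_Ioi_deriv_of_nonneg' (inv2_hderiv hx hy hxy) (inv2_nonneg hx hy)
    (inv2_tendsto hx hy)

lemma inv1_hderiv {x : ℝ} (hx : 0 < x) : ∀ s ∈ Ici (0:ℝ),
    HasDerivAt (fun s : ℝ => -(x + s)⁻¹) (((x + s) * (x + s))⁻¹) s := by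
  intro s hs
  have hxs : (0:ℝ) < x + s := by have := hs.out; linarith
  have h1 : HasDerivAt (fun s : ℝ => x + s) 1 s := (hasDerivAt_id s).const_add x
  have h2 := (h1.inv hxs.ne').neg
  refine h2.congr_deriv ?_
  field_simp

lemma inv1_tendsto {x : ℝ} (hx : 0 < x) :
    Tendsto (fun s : ℝ => -(x + s)⁻¹) atTop (𝓝 0) := by
  have : Tendsto (fun s : ℝ => (x + s)⁻¹) atTop (𝓝 0) :=
    (tendsto_atTop_add_const_left _ _ tendsto_id).inv_tendsto_atTop
  simpa using this.neg

lemma int_inv1 {x : ℝ} (hx : 0 < x) :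
    ∫ s in Ioi (0:ℝ), ((x + s) * (x + s))⁻¹ = x⁻¹ := by
  rw [integral_Ioi_of_hasDerivAt_of_nonneg' (inv1_hderiv hx) (inv2_nonneg hx hx)
    (inv1_tendsto hx)]
  simp

lemma intOn_inv1 {x : ℝ} (hx : 0 < x) :
    IntegrableOn (fun s : ℝ => ((x + s) * (x + s))⁻¹) (Ioi 0) :=
  integrableOn_Ioi_deriv_of_nonneg' (inv1_hderiv hx) (inv2_nonneg hx hx) (inv1_tendsto hx)

-- tanh derivative
lemma hasDerivAt_tanh (x : ℝ) : HasDerivAt Real.tanh (1 / Real.cosh x ^ 2) x := by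
  have hc := Real.cosh_pos x
  have h := (Real.hasDerivAt_sinh x).div (Real.hasDerivAt_cosh x) hc.ne'
  have heq : Real.tanh = fun x => Real.sinh x / Real.cosh x :=
    funext fun x => Real.tanh_eq_sinh_div_cosh x
  rw [heq]
  refine h.congr_deriv ?_
  have h2 : Real.cosh x ^ 2 - Real.sinh x ^ 2 = 1 := Real.cosh_sq_sub_sinh_sq x
  field_simp
  nlinarith [h2]

-- C4 : ∫ s in Ioc 0 1, (1/cosh(u s))^2
lemma cont_sech2 (u : ℝ) : Continuous (fun s : ℝ => (1 / Real.cosh (u * s)) ^ 2) := by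
  have : Continuous (fun s : ℝ => Real.cosh (u * s)) :=
    Real.continuous_cosh.comp (continuous_const.mul continuous_id)
  exact ((continuous_const.div this (fun s => (Real.cosh_pos _).ne')).pow 2)

lemma int_sech2 {u : ℝ} (hu : u ≠ 0) :
    ∫ s in Ioc (0:ℝ) 1, (1 / Real.cosh (u * s)) ^ 2 = Real.tanh u / u := by
  have hderiv : ∀ s ∈ Set.uIcc (0:ℝ) 1,
      HasDerivAt (fun s : ℝ => Real.tanh (u * s) / u) ((1 / Real.cosh (u * s)) ^ 2) s := by
    intro s _
    have h1 : HasDerivAt (fun s : ℝ => u * s) u s := by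
      simpa using (hasDerivAt_id s).const_mul u
    have h2 := ((hasDerivAt_tanh (u * s)).comp s h1).div_const u
    refine h2.congr_deriv ?_
    field_simp
  have hint : IntervalIntegrable (fun s : ℝ => (1 / Real.cosh (u * s)) ^ 2) volume 0 1 :=
    (cont_sech2 u).intervalIntegrable 0 1
  have := intervalIntegral.integral_eq_sub_of_hasDerivAt hderiv hint
  rw [intervalIntegral.integral_of_le zero_le_one] at this
  rw [this]
  simp [Real.tanh_zero]

lemma int_sech2_zero :
    ∫ s in Ioc (0:ℝ) 1, (1 / Real.cosh (0 * s)) ^ 2 = 1 := by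
  simp [Real.cosh_zero]

-- limits for continuity
lemma tendsto_sinh_div_s4 : Tendsto (fun u : ℝ => Real.sinh u / u) (nhdsWithin 0 {(0:ℝ)}ᶜ) (𝓝 1) := by
  have h := Real.hasDerivAt_sinh 0
  rw [hasDerivAt_iff_tendsto_slope] at h
  simp only [slope_fun_def_field, Real.sinh_zero, Real.cosh_zero, sub_zero] at h
  exact h

lemma tendsto_div_sinh : Tendsto (fun u : ℝ => u / Real.sinh u) (nhdsWithin 0 {(0:ℝ)}ᶜ) (𝓝 1) := by
  have h := (tendsto_sinh_div_s4).inv₀ one_ne_zero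
  rw [inv_one] at h
  apply h.congr'
  filter_upwards [self_mem_nhdsWithin] with u hu
  rw [← one_div, one_div_div]

lemma tendsto_tanh_div : Tendsto (fun u : ℝ => Real.tanh u / u) (nhdsWithin 0 {(0:ℝ)}ᶜ) (𝓝 1) := by
  have h := hasDerivAt_tanh 0
  rw [hasDerivAt_iff_tendsto_slope] at h
  simp only [slope_fun_def_field, Real.tanh_zero, Real.cosh_zero, sub_zero] at h
  simpa using h

lemma continuous_ite_zero (f : ℝ → ℝ) (hf : ∀ u : ℝ, u ≠ 0 → ContinuousAt f u)
    (hlim : Tendsto f (nhdsWithin 0 {(0:ℝ)}ᶜ) (𝓝 1)) :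
    Continuous fun u : ℝ => if u = 0 then 1 else f u := by
  set F := fun u : ℝ => if u = 0 then 1 else f u with hF
  rw [continuous_iff_continuousAt]
  intro u
  rcases eq_or_ne u 0 with rfl | hu
  · have h1 : Tendsto F (nhdsWithin 0 {(0:ℝ)}ᶜ) (𝓝 1) := by
      apply hlim.congr'
      filter_upwards [self_mem_nhdsWithin] with v hv
      exact (if_neg hv).symm
    have h2 : Tendsto F (pure (0:ℝ)) (𝓝 1) := by
      have := tendsto_pure_nhds F 0
      simpa [hF] using this
    have : Tendsto F (𝓝 0) (𝓝 1) := by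
      rw [← nhdsNE_sup_pure]
      exact tendsto_sup.mpr ⟨h1, h2⟩
    unfold ContinuousAt
    simpa [hF] using this
  · refine (hf u hu).congr ?_
    filter_upwards [isOpen_compl_singleton.mem_nhds hu] with v hv
    exact (if_neg hv).symm
lemma dot_eq {n : ℕ} (A : Matrix (Fin n) (Fin n) ℝ) (x : Fin n → ℝ) :
    star x ⬝ᵥ A.mulVec x = ∑ i, ∑ j, x i * x j * A i j := by
  simp only [dotProduct, Matrix.mulVec, star_trivial, Finset.mul_sum]
  refine Finset.sum_congr rfl fun i _ => Finset.sum_congr rfl fun j _ => by ring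

/-- An integral of psd matrix kernels is psd. -/
lemma integral_psd {n : ℕ} (μ : Measure ℝ) (K : ℝ → Matrix (Fin n) (Fin n) ℝ)
    (hK : ∀ᵐ s ∂μ, (K s).PosSemidef)
    (hint : ∀ i j, Integrable (fun s => K s i j) μ) :
    (Matrix.of fun i j : Fin n => ∫ s, K s i j ∂μ).PosSemidef := by
  rw [Matrix.posSemidef_iff_dotProduct_mulVec]
  constructor
  · ext i j
    simp only [Matrix.conjTranspose_apply, Matrix.of_apply, star_trivial]
    refine integral_congr_ae (hK.mono fun s hs => ?_)
    have h2 := congrFun (congrFun hs.isHermitian i) j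
    simpa [Matrix.conjTranspose_apply] using h2
  · intro x
    have key : star x ⬝ᵥ (Matrix.of fun i j : Fin n => ∫ s, K s i j ∂μ).mulVec x
        = ∫ s, star x ⬝ᵥ (K s).mulVec x ∂μ := by
      rw [dot_eq]
      simp only [Matrix.of_apply]
      have hInt : ∀ i j : Fin n, Integrable (fun s => x i * x j * K s i j) μ :=
        fun i j => (hint i j).const_mul _
      simp_rw [dot_eq]
      rw [integral_finset_sum _ (fun i _ => integrable_finset_sum _ (fun j _ => hInt i j))]
      refine Finset.sum_congr rfl fun i _ => ?_
      rw [integral_finset_sum _ (fun j _ => hInt i j)]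
      refine Finset.sum_congr rfl fun j _ => (integral_const_mul _ _).symm
    rw [key]
    exact integral_nonneg_of_ae (hK.mono fun s hs => hs.dotProduct_mulVec_nonneg x)

lemma one_div_cosh_eq (p q : ℝ) :
    1 / Real.cosh (p - q) = 2 * Real.exp (p + q) * (1 / (Real.exp (2*p) + Real.exp (2*q))) := by
  have h1 : Real.exp (2*p) + Real.exp (2*q)
      = Real.exp (p + q) * (Real.exp (p - q) + Real.exp (-(p - q))) := by
    rw [mul_add, ← Real.exp_add, ← Real.exp_add]
    congr 1 <;> ring_nf
  rw [Real.cosh_eq, h1]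
  have e1 := Real.exp_pos (p + q)
  have e2 : (0:ℝ) < Real.exp (p - q) + Real.exp (-(p - q)) := by positivity
  field_simp

lemma psd1 {n : ℕ} (b : Fin n → ℝ) :
    (Matrix.of fun i j : Fin n => 1 / Real.cosh (b i - b j)).PosSemidef := by
  set v : ℝ → Fin n → ℝ :=
    fun s i => Real.sqrt 2 * Real.exp (b i - Real.exp (2 * b i) * s) with hv
  have hprod : ∀ (i j : Fin n) (s : ℝ), v s i * v s j
      = (2 * Real.exp (b i + b j))
        * Real.exp (-((Real.exp (2 * b i) + Real.exp (2 * b j)) * s)) := by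
    intro i j s
    have h2 : Real.sqrt 2 * Real.sqrt 2 = 2 := Real.mul_self_sqrt (by norm_num)
    simp only [hv]
    rw [mul_mul_mul_comm, h2, ← Real.exp_add, mul_assoc, ← Real.exp_add]
    congr 2
    ring
  have hc : ∀ i j : Fin n, (0:ℝ) < Real.exp (2 * b i) + Real.exp (2 * b j) :=
    fun i j => by positivity
  have hint : ∀ i j, Integrable (fun s => v s i * v s j) (volume.restrict (Ioi 0)) := by
    intro i j
    have h := (intOn_exp_neg (hc i j)).const_mul (2 * Real.exp (b i + b j))
    exact h.congr (Eventually.of_forall fun s => (hprod i j s).symm)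
  have h := rankOne_integral_psd (volume.restrict (Ioi 0)) v hint
  have hM : (Matrix.of fun i j : Fin n => 1 / Real.cosh (b i - b j))
      = Matrix.of fun i j : Fin n => ∫ s, v s i * v s j ∂(volume.restrict (Ioi 0)) := by
    ext i j
    simp only [Matrix.of_apply]
    have : ∫ s, v s i * v s j ∂(volume.restrict (Ioi 0))
        = (2 * Real.exp (b i + b j))
          * ∫ s in Ioi (0:ℝ), Real.exp (-((Real.exp (2 * b i) + Real.exp (2 * b j)) * s)) := by
      simp_rw [hprod i j]
      exact integral_const_mul _ _
    rw [this, int_exp_neg (hc i j), one_div_cosh_eq]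
  rw [hM]
  exact h

lemma psd2 {n : ℕ} (b : Fin n → ℝ) :
    (Matrix.of fun i j : Fin n =>
      if b i = b j then (1:ℝ) else (b i - b j) / Real.sinh (b i - b j)).PosSemidef := by
  set v : ℝ → Fin n → ℝ := fun s i => Real.exp (b i) / (Real.exp (2 * b i) + s) with hv
  have hprod : ∀ (i j : Fin n) (s : ℝ), v s i * v s j
      = Real.exp (b i + b j) * ((Real.exp (2 * b i) + s) * (Real.exp (2 * b j) + s))⁻¹ := by
    intro i j s
    simp only [hv]
    rw [div_mul_div_comm, ← Real.exp_add, div_eq_mul_inv]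
  have hx : ∀ i : Fin n, (0:ℝ) < Real.exp (2 * b i) := fun i => Real.exp_pos _
  have hint : ∀ i j, Integrable (fun s => v s i * v s j) (volume.restrict (Ioi 0)) := by
    intro i j
    rcases eq_or_ne (b i) (b j) with hb | hb
    · have h := (intOn_inv1 (hx i)).const_mul (Real.exp (b i + b j))
      exact h.congr (Eventually.of_forall fun s => by simp only [hprod i j s, hb])
    · have hxy : Real.exp (2 * b i) ≠ Real.exp (2 * b j) := by
        simp only [ne_eq, Real.exp_eq_exp]
        intro h; exact hb (by linarith)
      have h := (intOn_inv2 (hx i) (hx j) hxy).const_mul (Real.exp (b i + b j))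
      exact h.congr (Eventually.of_forall fun s => (hprod i j s).symm)
  have h := rankOne_integral_psd (volume.restrict (Ioi 0)) v hint
  have hM : (Matrix.of fun i j : Fin n =>
        if b i = b j then (1:ℝ) else (b i - b j) / Real.sinh (b i - b j))
      = Matrix.of fun i j : Fin n => ∫ s, v s i * v s j ∂(volume.restrict (Ioi 0)) := by
    ext i j
    simp only [Matrix.of_apply]
    have hval : ∫ s, v s i * v s j ∂(volume.restrict (Ioi 0))
        = Real.exp (b i + b j)
          * ∫ s in Ioi (0:ℝ), ((Real.exp (2 * b i) + s) * (Real.exp (2 * b j) + s))⁻¹ := by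
      simp_rw [hprod i j]
      exact integral_const_mul _ _
    rcases eq_or_ne (b i) (b j) with hb | hb
    · rw [if_pos hb, hval, hb, int_inv1 (hx j), ← Real.exp_neg, ← Real.exp_add,
        show b j + b j + -(2 * b j) = 0 by ring, Real.exp_zero]
    · have hxy : Real.exp (2 * b i) ≠ Real.exp (2 * b j) := by
        simp only [ne_eq, Real.exp_eq_exp]
        intro h; exact hb (by linarith)
      rw [if_neg hb, hval, int_inv2 (hx i) (hx j) hxy, Real.log_exp, Real.log_exp, Real.sinh_eq]
      have hd : Real.exp (2 * b i) - Real.exp (2 * b j)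
          = Real.exp (b i + b j) * (Real.exp (b i - b j) - Real.exp (-(b i - b j))) := by
        rw [mul_sub, ← Real.exp_add, ← Real.exp_add]
        congr 2 <;> ring
      have he := Real.exp_ne_zero (b i + b j)
      rw [hd, ← mul_div_assoc, mul_div_mul_left _ _ he, div_div_eq_mul_div]
      congr 1
      ring
  rw [hM]
  exact h

lemma sech_sq_eq (p q : ℝ) :
    (1 / Real.cosh (p - q)) ^ 2
      = 4 * Real.exp (2 * p + 2 * q) * (1 / (Real.exp (2 * p) + Real.exp (2 * q)) ^ 2) := by
  rw [one_div_cosh_eq p q, mul_pow, mul_pow, div_pow, one_pow]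
  rw [show (Real.exp (p + q)) ^ 2 = Real.exp (p + q) * Real.exp (p + q) by ring,
    ← Real.exp_add, show p + q + (p + q) = 2 * p + 2 * q by ring]
  norm_num

lemma psd_sech2 {n : ℕ} (b : Fin n → ℝ) :
    (Matrix.of fun i j : Fin n => (1 / Real.cosh (b i - b j)) ^ 2).PosSemidef := by
  set v : ℝ → Fin n → ℝ :=
    fun s i => 2 * Real.exp (2 * b i - Real.exp (2 * b i) * s) * Real.sqrt s with hv
  have hprod : ∀ (i j : Fin n), ∀ s ∈ Ioi (0:ℝ), v s i * v s j
      = (4 * Real.exp (2 * b i + 2 * b j))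
        * (s * Real.exp (-((Real.exp (2 * b i) + Real.exp (2 * b j)) * s))) := by
    intro i j s hs
    have hss : Real.sqrt s * Real.sqrt s = s := Real.mul_self_sqrt (le_of_lt hs.out)
    simp only [hv]
    rw [mul_mul_mul_comm, mul_mul_mul_comm (2:ℝ), ← Real.exp_add, hss]
    rw [show (2:ℝ) * 2 = 4 by norm_num]
    rw [show 2 * b i - Real.exp (2 * b i) * s + (2 * b j - Real.exp (2 * b j) * s)
        = 2 * b i + 2 * b j + -((Real.exp (2 * b i) + Real.exp (2 * b j)) * s) by ring,
      Real.exp_add]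
    ring
  have hc : ∀ i j : Fin n, (0:ℝ) < Real.exp (2 * b i) + Real.exp (2 * b j) :=
    fun i j => by positivity
  have hint : ∀ i j, Integrable (fun s => v s i * v s j) (volume.restrict (Ioi 0)) := by
    intro i j
    have h := ((intOn_sexp_neg (hc i j)).const_mul (4 * Real.exp (2 * b i + 2 * b j)))
    exact IntegrableOn.congr_fun h (fun s hs => (hprod i j s hs).symm) measurableSet_Ioi
  have h := rankOne_integral_psd (volume.restrict (Ioi 0)) v hint
  have hM : (Matrix.of fun i j : Fin n => (1 / Real.cosh (b i - b j)) ^ 2)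
      = Matrix.of fun i j : Fin n => ∫ s, v s i * v s j ∂(volume.restrict (Ioi 0)) := by
    ext i j
    simp only [Matrix.of_apply]
    have hval : ∫ s, v s i * v s j ∂(volume.restrict (Ioi 0))
        = (4 * Real.exp (2 * b i + 2 * b j))
          * ∫ s in Ioi (0:ℝ),
              s * Real.exp (-((Real.exp (2 * b i) + Real.exp (2 * b j)) * s)) := by
      rw [setIntegral_congr_fun measurableSet_Ioi (hprod i j)]
      exact integral_const_mul _ _
    rw [hval, int_sexp_neg (hc i j), sech_sq_eq]
  rw [hM]
  exact h

lemma psd3 {n : ℕ} (b : Fin n → ℝ) :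
    (Matrix.of fun i j : Fin n =>
      if b i = b j then (1:ℝ)
      else Real.tanh (b i - b j) / (b i - b j)).PosSemidef := by
  set K : ℝ → Matrix (Fin n) (Fin n) ℝ :=
    fun s => Matrix.of fun i j : Fin n => (1 / Real.cosh (b i * s - b j * s)) ^ 2 with hK
  have hKpsd : ∀ s : ℝ, (K s).PosSemidef := fun s => psd_sech2 (fun i => b i * s)
  have hint : ∀ i j : Fin n, Integrable (fun s => K s i j) (volume.restrict (Ioc 0 1)) := by
    intro i j
    have hcont : Continuous fun s : ℝ => (1 / Real.cosh (b i * s - b j * s)) ^ 2 := by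
      have h1 : Continuous fun s : ℝ => Real.cosh (b i * s - b j * s) :=
        Real.continuous_cosh.comp ((continuous_const.mul continuous_id).sub
          (continuous_const.mul continuous_id))
      exact (continuous_const.div h1 fun s => (Real.cosh_pos _).ne').pow 2
    exact hcont.integrableOn_Ioc
  have h := integral_psd (volume.restrict (Ioc 0 1)) K
    (Eventually.of_forall hKpsd) hint
  have hM : (Matrix.of fun i j : Fin n =>
        if b i = b j then (1:ℝ) else Real.tanh (b i - b j) / (b i - b j))
      = Matrix.of fun i j : Fin n => ∫ s, K s i j ∂(volume.restrict (Ioc 0 1)) := by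
    ext i j
    simp only [Matrix.of_apply, hK]
    rcases eq_or_ne (b i) (b j) with hb | hb
    · rw [if_pos hb]
      have : ∀ s : ℝ, (1 / Real.cosh (b i * s - b j * s)) ^ 2 = 1 := by
        intro s
        rw [hb, sub_self, Real.cosh_zero]
        norm_num
      simp_rw [this]
      simp
    · rw [if_neg hb]
      have hu : b i - b j ≠ 0 := sub_ne_zero.mpr hb
      have : ∀ s : ℝ, (1 / Real.cosh (b i * s - b j * s)) ^ 2
          = (1 / Real.cosh ((b i - b j) * s)) ^ 2 := by
        intro s; rw [sub_mul]
      simp_rw [this]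
      exact (int_sech2 hu).symm
  rw [hM]
  exact h

lemma real_exp_eq_one {x : ℝ} (h : Real.exp x = 1) : x = 0 := by simpa using h

end Aux

section Main
open MeasureTheory Filter Real Set Matrix
open scoped Topology

/-- For `0 < |α| ≤ 1` the functions `1/cosh(αt/2)`, `(αt/2)/sinh(αt/2)` and
`tanh(αt/2)/(αt/2)` are positive definite, and for `t ≠ 0` they equal the ratios
`H_α/G_α`, `G_α/LM` and `LM/A_α` evaluated at `(eᵗ, 1)` respectively. -/
theorem statement4 (α : ℝ) (hα0 : 0 < |α|) (hα1 : |α| ≤ 1)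
    (φ₁ φ₂ φ₃ : ℝ → ℝ)
    (hφ₁ : ∀ t : ℝ, φ₁ t = 1 / Real.cosh (α * t / 2))
    (hφ₂0 : φ₂ 0 = 1)
    (hφ₂ : ∀ t : ℝ, t ≠ 0 → φ₂ t = (α * t / 2) / Real.sinh (α * t / 2))
    (hφ₃0 : φ₃ 0 = 1)
    (hφ₃ : ∀ t : ℝ, t ≠ 0 → φ₃ t = Real.tanh (α * t / 2) / (α * t / 2)) :
    (IsPosDefFun φ₁ ∧ IsPosDefFun φ₂ ∧ IsPosDefFun φ₃) ∧
    (∀ t : ℝ, t ≠ 0 →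
      φ₁ t = Hmean α (Real.exp t) 1 / Gmean α (Real.exp t) 1 ∧
      φ₂ t = Gmean α (Real.exp t) 1 / LM (Real.exp t) 1 ∧
      φ₃ t = LM (Real.exp t) 1 / Amean α (Real.exp t) 1) := by
  have hαne : α ≠ 0 := abs_pos.mp hα0
  have hcosh_ne : ∀ u : ℝ, Real.cosh u ≠ 0 := fun u => (Real.cosh_pos u).ne'
  constructor
  · refine ⟨⟨?_, ?_⟩, ⟨?_, ?_⟩, ⟨?_, ?_⟩⟩
    · -- continuity of φ₁
      have h : φ₁ = fun t => 1 / Real.cosh (α * t / 2) := funext hφ₁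
      rw [h]
      exact continuous_const.div
        (Real.continuous_cosh.comp ((continuous_const.mul continuous_id).div_const 2))
        fun t => hcosh_ne _
    · -- positivity of φ₁
      intro n t
      have h := psd_ofReal (psd1 (fun i : Fin n => α * t i / 2))
      have hM : (Matrix.of fun i j : Fin n => (φ₁ (t i - t j) : ℂ))
          = Matrix.of fun i j : Fin n =>
              (((Matrix.of fun i j : Fin n =>
                1 / Real.cosh (α * t i / 2 - α * t j / 2)) i j : ℝ) : ℂ) := by
        ext i j
        simp only [Matrix.of_apply, Complex.ofReal_inj]
        rw [hφ₁, show α * (t i - t j) / 2 = α * t i / 2 - α * t j / 2 from by ring]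
      rw [hM]
      exact h
    · -- continuity of φ₂
      have hsinh_cont : ∀ u : ℝ, u ≠ 0 → ContinuousAt (fun u : ℝ => u / Real.sinh u) u :=
        fun u hu => continuousAt_id.div Real.continuous_sinh.continuousAt
          (Real.sinh_ne_zero.mpr hu)
      have hG := continuous_ite_zero _ hsinh_cont tendsto_div_sinh
      have h : φ₂ = fun s => (fun u : ℝ => if u = 0 then 1 else u / Real.sinh u)
          (α * s / 2) := by
        funext s
        rcases eq_or_ne s 0 with rfl | hs
        · simp [hφ₂0]
        · have hu : α * s / 2 ≠ 0 := div_ne_zero (mul_ne_zero hαne hs) two_ne_zero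
          simp only [if_neg hu, hφ₂ s hs]
      rw [h]
      exact hG.comp ((continuous_const.mul continuous_id).div_const 2)
    · -- positivity of φ₂
      intro n t
      have h := psd_ofReal (psd2 (fun i : Fin n => α * t i / 2))
      have hM : (Matrix.of fun i j : Fin n => (φ₂ (t i - t j) : ℂ))
          = Matrix.of fun i j : Fin n =>
              (((Matrix.of fun i j : Fin n =>
                if α * t i / 2 = α * t j / 2 then (1:ℝ)
                else (α * t i / 2 - α * t j / 2)
                  / Real.sinh (α * t i / 2 - α * t j / 2)) i j : ℝ) : ℂ) := by
        ext i j
        simp only [Matrix.of_apply, Complex.ofReal_inj]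
        rcases eq_or_ne (t i) (t j) with hij | hij
        · rw [if_pos (by rw [hij]), hij, sub_self, hφ₂0]
        · have hb : α * t i / 2 ≠ α * t j / 2 := by
            intro hcon
            apply hij
            field_simp at hcon
            exact hcon
          rw [if_neg hb, hφ₂ _ (sub_ne_zero.mpr hij),
            show α * (t i - t j) / 2 = α * t i / 2 - α * t j / 2 from by ring]
      rw [hM]
      exact h
    · -- continuity of φ₃
      have htanh : Continuous Real.tanh := by
        have h : Real.tanh = fun x => Real.sinh x / Real.cosh x :=
          funext fun x => Real.tanh_eq_sinh_div_cosh x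
        rw [h]
        exact Real.continuous_sinh.div Real.continuous_cosh fun x => hcosh_ne x
      have htanh_cont : ∀ u : ℝ, u ≠ 0 → ContinuousAt (fun u : ℝ => Real.tanh u / u) u :=
        fun u hu => htanh.continuousAt.div continuousAt_id hu
      have hG := continuous_ite_zero _ htanh_cont tendsto_tanh_div
      have h : φ₃ = fun s => (fun u : ℝ => if u = 0 then 1 else Real.tanh u / u)
          (α * s / 2) := by
        funext s
        rcases eq_or_ne s 0 with rfl | hs
        · simp [hφ₃0]
        · have hu : α * s / 2 ≠ 0 := div_ne_zero (mul_ne_zero hαne hs) two_ne_zero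
          simp only [if_neg hu, hφ₃ s hs]
      rw [h]
      exact hG.comp ((continuous_const.mul continuous_id).div_const 2)
    · -- positivity of φ₃
      intro n t
      have h := psd_ofReal (psd3 (fun i : Fin n => α * t i / 2))
      have hM : (Matrix.of fun i j : Fin n => (φ₃ (t i - t j) : ℂ))
          = Matrix.of fun i j : Fin n =>
              (((Matrix.of fun i j : Fin n =>
                if α * t i / 2 = α * t j / 2 then (1:ℝ)
                else Real.tanh (α * t i / 2 - α * t j / 2)
                  / (α * t i / 2 - α * t j / 2)) i j : ℝ) : ℂ) := by
        ext i j
        simp only [Matrix.of_apply, Complex.ofReal_inj]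
        rcases eq_or_ne (t i) (t j) with hij | hij
        · rw [if_pos (by rw [hij]), hij, sub_self, hφ₃0]
        · have hb : α * t i / 2 ≠ α * t j / 2 := by
            intro hcon
            apply hij
            field_simp at hcon
            exact hcon
          rw [if_neg hb, hφ₃ _ (sub_ne_zero.mpr hij),
            show α * (t i - t j) / 2 = α * t i / 2 - α * t j / 2 from by ring]
      rw [hM]
      exact h
  · -- the identities with the means
    intro t ht
    have hx1 : Real.exp t ≠ 1 := fun h => ht (real_exp_eq_one h)
    have hxne : Real.exp t - 1 ≠ 0 := sub_ne_zero.mpr hx1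
    have hat : α * t ≠ 0 := mul_ne_zero hαne ht
    set E := Real.exp (α * t / 2) with hE
    have hEpos : 0 < E := Real.exp_pos _
    have hEne : E ≠ 0 := hEpos.ne'
    have hE2 : E * E = Real.exp (α * t) := by
      rw [hE, ← Real.exp_add]
      congr 1
      ring
    have hE2ne1 : E * E ≠ 1 := by
      rw [hE2]
      exact fun h => hat (real_exp_eq_one h)
    have hrpow : Real.exp t ^ α = E * E := by
      rw [Real.rpow_def_of_pos (Real.exp_pos t), Real.log_exp, hE2]
      congr 1
      ring
    have hrpow2 : (Real.exp t * 1) ^ (α / 2) = E := by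
      rw [mul_one, Real.rpow_def_of_pos (Real.exp_pos t), Real.log_exp, hE]
      congr 1
      ring
    have hrpow3 : (Real.exp t * 1) ^ α = E * E := by rw [mul_one, hrpow]
    have hone : (1:ℝ) ^ α = 1 := Real.one_rpow α
    have hcosh : Real.cosh (α * t / 2) = (E + E⁻¹) / 2 := by
      rw [Real.cosh_eq, hE, Real.exp_neg]
    have hsinh : Real.sinh (α * t / 2) = (E - E⁻¹) / 2 := by
      rw [Real.sinh_eq, hE, Real.exp_neg]
    have hEE : E - E⁻¹ ≠ 0 := by
      rw [sub_ne_zero]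
      intro h
      apply hE2ne1
      nth_rewrite 2 [h]
      exact mul_inv_cancel₀ hEne
    have hEp : E + E⁻¹ ≠ 0 := by positivity
    have hE21 : E * E - 1 ≠ 0 := sub_ne_zero.mpr hE2ne1
    have hE2p1 : E * E + 1 ≠ 0 := by positivity
    refine ⟨?_, ?_, ?_⟩
    · rw [hφ₁ t, Hmean, Gmean, if_neg hx1, if_neg hαne, if_neg hx1, if_neg hαne,
        hrpow3, hrpow2, hrpow, hone, hcosh]
      field_simp
      exact (div_self (by rw [sq]; exact hE21)).symm
    · rw [hφ₂ t ht, Gmean, LM, if_neg hx1, if_neg hαne, if_neg hx1, hrpow2, hrpow, hone,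
        hsinh, Real.log_exp, Real.log_one]
      field_simp
      ring
    · rw [hφ₃ t ht, LM, Amean, if_neg hx1, if_neg hx1, if_neg hαne, hrpow, hone,
        Real.log_exp, Real.log_one, Real.tanh_eq_sinh_div_cosh, hsinh, hcosh]
      field_simp
      ring

end Main
end

section
/- For every α ∈ ℝ with |α| ≤ 1 and all x, y > 0: H_α(x,y) ≤ G_α(x,y) ≤ LM(x,y) ≤ A_α(x,y). -/
/-! Auxiliary lemmas -/

lemma aux1 {s : ℝ} (hs : 1 < s) : 2 * s * Real.log s ≤ s ^ 2 - 1 := by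
  set F : ℝ → ℝ := fun s => s ^ 2 - 1 - 2 * (s * Real.log s) with hF
  have hder : ∀ t : ℝ, 0 < t → HasDerivAt F (2 * (t - 1 - Real.log t)) t := by
    intro t ht
    have h1 : HasDerivAt (fun s : ℝ => s ^ 2 - 1) (2 * t) t := by
      simpa using (hasDerivAt_pow 2 t).sub_const 1
    have h2 : HasDerivAt (fun s : ℝ => s * Real.log s) (Real.log t + 1) t := by
      have := (hasDerivAt_id t).fun_mul (Real.hasDerivAt_log ht.ne')
      simpa [mul_inv_cancel₀ ht.ne'] using this
    have := h1.fun_sub (h2.const_mul 2)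
    convert this using 1
    exacts [rfl, rfl, by ring]
  have hmono : StrictMonoOn F (Set.Ici 1) := by
    apply strictMonoOn_of_deriv_pos (convex_Ici 1)
    · intro t ht
      have ht0 : (0:ℝ) < t := lt_of_lt_of_le one_pos ht
      exact ((hder t ht0).differentiableAt).continuousAt.continuousWithinAt
    · intro t ht
      rw [interior_Ici, Set.mem_Ioi] at ht
      have ht0 : (0:ℝ) < t := lt_trans one_pos ht
      rw [(hder t ht0).deriv]
      have := Real.log_lt_sub_one_of_pos ht0 (ne_of_gt ht)
      linarith
  have h01 : F 1 < F s := hmono (Set.self_mem_Ici) (Set.mem_Ici.mpr hs.le) hs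
  simp only [hF, Real.log_one] at h01
  nlinarith [h01]

lemma aux2 {s : ℝ} (hs : 1 < s) : s ^ 2 - 1 ≤ (s ^ 2 + 1) * Real.log s := by
  set G : ℝ → ℝ := fun s => (s ^ 2 + 1) * Real.log s - (s ^ 2 - 1) with hG
  have hder : ∀ t : ℝ, 0 < t →
      HasDerivAt G (2 * t * Real.log t + (t ^ 2 + 1) * t⁻¹ - 2 * t) t := by
    intro t ht
    have h1 : HasDerivAt (fun s : ℝ => s ^ 2 + 1) (2 * t) t := by
      simpa using (hasDerivAt_pow 2 t).add_const 1
    have h2 := h1.fun_mul (Real.hasDerivAt_log ht.ne')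
    have h3 : HasDerivAt (fun s : ℝ => s ^ 2 - 1) (2 * t) t := by
      simpa using (hasDerivAt_pow 2 t).sub_const 1
    have := h2.fun_sub h3
    convert this using 1
    try ring
  have hmono : StrictMonoOn G (Set.Ici 1) := by
    apply strictMonoOn_of_deriv_pos (convex_Ici 1)
    · intro t ht
      have ht0 : (0:ℝ) < t := lt_of_lt_of_le one_pos ht
      exact ((hder t ht0).differentiableAt).continuousAt.continuousWithinAt
    · intro t ht
      rw [interior_Ici, Set.mem_Ioi] at ht
      have ht0 : (0:ℝ) < t := lt_trans one_pos ht
      rw [(hder t ht0).deriv]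
      have ht2 : (0:ℝ) < t ^ 2 := by positivity
      have hne : (t ^ 2)⁻¹ ≠ 1 := by
        intro h
        have : t ^ 2 = 1 := by field_simp at h; linarith [h]
        nlinarith
      have h := Real.log_lt_sub_one_of_pos (by positivity : (0:ℝ) < (t ^ 2)⁻¹) hne
      rw [Real.log_inv, Real.log_pow] at h
      -- h : -(2 * log t) < (t^2)⁻¹ - 1
      have hinv : t * t⁻¹ = 1 := mul_inv_cancel₀ ht0.ne'
      have hinv2 : t ^ 2 * (t ^ 2)⁻¹ = 1 := mul_inv_cancel₀ ht2.ne'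
      push_cast at h
      nlinarith [mul_pos ht0 ht0, h, hinv, hinv2]
  have h01 : G 1 < G s := hmono (Set.self_mem_Ici) (Set.mem_Ici.mpr hs.le) hs
  simp only [hG, Real.log_one] at h01
  nlinarith [h01]

lemma harm_le_sqrt {u v : ℝ} (hu : 0 < u) (hv : 0 < v) :
    2 * (u * v) / (u + v) ≤ Real.sqrt (u * v) := by
  have ha := Real.sq_sqrt hu.le
  have hb := Real.sq_sqrt hv.le
  have ha0 : 0 < Real.sqrt u := Real.sqrt_pos.mpr hu
  have hb0 : 0 < Real.sqrt v := Real.sqrt_pos.mpr hv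
  rw [div_le_iff₀ (by positivity), Real.sqrt_mul hu.le]
  nlinarith [sq_nonneg (Real.sqrt u - Real.sqrt v), mul_pos ha0 hb0]

lemma sqrt_le_logMean {u v : ℝ} (hu : 0 < u) (hv : 0 < v) (huv : u ≠ v) :
    Real.sqrt (u * v) ≤ (u - v) / (Real.log u - Real.log v) := by
  wlog hlt : v < u with H
  · push_neg at hlt
    have hlt' : u < v := lt_of_le_of_ne hlt huv
    have := H hv hu huv.symm hlt'
    rw [mul_comm] at this
    rw [show u - v = -(v - u) by ring, show Real.log u - Real.log v
      = -(Real.log v - Real.log u) by ring, neg_div_neg_eq]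
    exact this
  set s := Real.sqrt (u / v) with hsdef
  have hdiv : 1 < u / v := (one_lt_div hv).mpr hlt
  have hs1 : 1 < s := by
    rw [hsdef, show (1:ℝ) = Real.sqrt 1 by simp]
    exact Real.sqrt_lt_sqrt one_pos.le hdiv
  have hs0 : 0 < s := lt_trans one_pos hs1
  have hs2 : s ^ 2 = u / v := Real.sq_sqrt (by positivity)
  have husv : u = s ^ 2 * v := by rw [hs2]; field_simp
  have hsqrt : Real.sqrt (u * v) = s * v := by
    rw [husv, show s ^ 2 * v * v = (s * v) ^ 2 by ring, Real.sqrt_sq (by positivity)]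
  have hlog : Real.log u - Real.log v = 2 * Real.log s := by
    rw [husv, Real.log_mul (by positivity) hv.ne', Real.log_pow]
    push_cast; ring
  have hls : 0 < Real.log s := Real.log_pos hs1
  rw [hsqrt, hlog, le_div_iff₀ (by positivity), husv]
  nlinarith [aux1 hs1, hv, mul_le_mul_of_nonneg_right (aux1 hs1) hv.le]

lemma logMean_le_arith {u v : ℝ} (hu : 0 < u) (hv : 0 < v) (huv : u ≠ v) :
    (u - v) / (Real.log u - Real.log v) ≤ (u + v) / 2 := by
  wlog hlt : v < u with H
  · push_neg at hlt
    have hlt' : u < v := lt_of_le_of_ne hlt huv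
    have := H hv hu huv.symm hlt'
    rw [show u - v = -(v - u) by ring, show Real.log u - Real.log v
      = -(Real.log v - Real.log u) by ring, neg_div_neg_eq, add_comm]
    exact this
  set s := Real.sqrt (u / v) with hsdef
  have hdiv : 1 < u / v := (one_lt_div hv).mpr hlt
  have hs1 : 1 < s := by
    rw [hsdef, show (1:ℝ) = Real.sqrt 1 by simp]
    exact Real.sqrt_lt_sqrt one_pos.le hdiv
  have hs0 : 0 < s := lt_trans one_pos hs1
  have hs2 : s ^ 2 = u / v := Real.sq_sqrt (by positivity)
  have husv : u = s ^ 2 * v := by rw [hs2]; field_simp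
  have hlog : Real.log u - Real.log v = 2 * Real.log s := by
    rw [husv, Real.log_mul (by positivity) hv.ne', Real.log_pow]
    push_cast; ring
  have hls : 0 < Real.log s := Real.log_pos hs1
  rw [hlog, div_le_div_iff₀ (by positivity) two_pos, husv]
  nlinarith [aux2 hs1, hv, mul_le_mul_of_nonneg_right (aux2 hs1) hv.le]
open scoped ComplexOrder

/-- For `|α| ≤ 1` and `x, y > 0`: `H_α ≤ G_α ≤ LM ≤ A_α`. -/
theorem statement5 (α : ℝ) (hα : |α| ≤ 1) (x y : ℝ) (hx : 0 < x) (hy : 0 < y) :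
    Hmean α x y ≤ Gmean α x y ∧ Gmean α x y ≤ LM x y ∧ LM x y ≤ Amean α x y := by
  by_cases hxy : x = y
  · simp [Hmean, Gmean, Amean, LM, hxy]
  by_cases ha0 : α = 0
  · simp [Hmean, Gmean, Amean, hxy, ha0]
  -- main case
  set u := x ^ α with hu_def
  set v := y ^ α with hv_def
  have hu : 0 < u := Real.rpow_pos_of_pos hx α
  have hv : 0 < v := Real.rpow_pos_of_pos hy α
  have hlogxy : Real.log x ≠ Real.log y := by
    intro h
    exact hxy (by rw [← Real.exp_log hx, ← Real.exp_log hy, h])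
  have hL : Real.log x - Real.log y ≠ 0 := sub_ne_zero.mpr hlogxy
  have huv : u ≠ v := by
    intro h
    apply hlogxy
    have := congrArg Real.log h
    rw [hu_def, hv_def, Real.log_rpow hx, Real.log_rpow hy] at this
    exact mul_left_cancel₀ ha0 this
  have hD : u - v ≠ 0 := sub_ne_zero.mpr huv
  have hlog : Real.log u - Real.log v = α * (Real.log x - Real.log y) := by
    rw [hu_def, hv_def, Real.log_rpow hx, Real.log_rpow hy]; ring
  set P := α * (x - y) / (u - v) with hP_def
  have hP : 0 < P := by
    rcases lt_or_gt_of_ne ha0 with hneg | hpos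
    · rcases lt_or_gt_of_ne hxy with hlt | hlt
      · have h1 : v < u := Real.rpow_lt_rpow_of_neg hx hlt hneg
        rw [hP_def]
        apply div_pos (by nlinarith) (by linarith)
      · have h1 : u < v := Real.rpow_lt_rpow_of_neg hy hlt hneg
        rw [hP_def]
        exact div_pos_of_neg_of_neg (by nlinarith) (by linarith)
    · rcases lt_or_gt_of_ne hxy with hlt | hlt
      · have h1 : u < v := Real.rpow_lt_rpow hx.le hlt hpos
        rw [hP_def]
        exact div_pos_of_neg_of_neg (by nlinarith) (by linarith)
      · have h1 : v < u := Real.rpow_lt_rpow hy.le hlt hpos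
        rw [hP_def]
        apply div_pos (by nlinarith) (by linarith)
  have hxyuv : (x * y) ^ α = u * v := Real.mul_rpow hx.le hy.le
  have hGsqrt : (x * y) ^ (α / 2) = Real.sqrt (u * v) := by
    rw [Real.sqrt_eq_rpow, ← hxyuv, ← Real.rpow_mul (by positivity)]
    ring_nf
  have hH : Hmean α x y = P * (2 * (u * v) / (u + v)) := by
    rw [Hmean, if_neg hxy, if_neg ha0, ← hu_def, ← hv_def, hxyuv, hP_def]
    field_simp
  have hG : Gmean α x y = P * Real.sqrt (u * v) := by
    rw [Gmean, if_neg hxy, if_neg ha0, ← hu_def, ← hv_def, hGsqrt, hP_def]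
    field_simp
  have hLM : LM x y = P * ((u - v) / (Real.log u - Real.log v)) := by
    rw [LM, if_neg hxy, hP_def, hlog]
    field_simp
  have hA : Amean α x y = P * ((u + v) / 2) := by
    rw [Amean, if_neg hxy, if_neg ha0, ← hu_def, ← hv_def, hP_def]
    field_simp
  refine ⟨?_, ?_, ?_⟩
  · rw [hH, hG]
    exact mul_le_mul_of_nonneg_left (harm_le_sqrt hu hv) hP.le
  · rw [hG, hLM]
    exact mul_le_mul_of_nonneg_left (sqrt_le_logMean hu hv huv) hP.le
  · rw [hLM, hA]
    exact mul_le_mul_of_nonneg_left (logMean_le_arith hu hv huv) hP.le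
end

section
/- Let 0 < α ≤ 1 and 0 < β < 1 with β + α/2 ≤ 1. Then the function φ : ℝ → ℝ defined by φ(t) = M_β(e^{2t}, 1) / G_α(e^{2t}, 1) for t ≠ 0 and φ(0) = 1 is positive definite. In particular this holds for α = 1/m and β = m/(m+1) for every natural number m ≥ 1. -/
open scoped ComplexOrder

open Complex Finset Matrix Real MeasureTheory Set Filter

section Aux

def PD (f : ℝ → ℝ) : Prop := ∀ (n : ℕ) (t : Fin n → ℝ),
  Matrix.PosSemidef (Matrix.of fun i j : Fin n => (f (t i - t j) : ℂ))

noncomputable def qform {n : ℕ} (f : ℝ → ℝ) (t : Fin n → ℝ) (x : Fin n → ℂ) : ℂ :=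
  ∑ i, ∑ j, (starRingEnd ℂ) (x i) * ((f (t i - t j) : ℂ) * x j)

lemma dot_eq_qform {n : ℕ} (f : ℝ → ℝ) (t : Fin n → ℝ) (x : Fin n → ℂ) :
    dotProduct (star x) ((Matrix.of fun i j : Fin n => (f (t i - t j) : ℂ)).mulVec x)
      = qform f t x := by
  simp only [dotProduct, Matrix.mulVec, qform, Finset.mul_sum, Pi.star_apply,
    Matrix.of_apply]
  rfl

lemma conj_qform {n : ℕ} {f : ℝ → ℝ} (hev : ∀ t, f (-t) = f t) (t : Fin n → ℝ) (x : Fin n → ℂ) :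
    (starRingEnd ℂ) (qform f t x) = qform f t x := by
  unfold qform
  rw [map_sum, Finset.sum_comm]
  refine Finset.sum_congr rfl fun i _ => ?_
  rw [map_sum]
  refine Finset.sum_congr rfl fun j _ => ?_
  simp only [_root_.map_mul, conj_ofReal, Complex.conj_conj]
  rw [show t j - t i = -(t i - t j) by ring, hev]
  ring

lemma pd_of_qform {f : ℝ → ℝ} (hev : ∀ t, f (-t) = f t)
    (h : ∀ (n : ℕ) (t : Fin n → ℝ) (x : Fin n → ℂ), 0 ≤ (qform f t x).re) : PD f := by
  intro n t
  have herm : (Matrix.of fun i j : Fin n => (f (t i - t j) : ℂ)).IsHermitian := by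
    ext i j
    simp only [Matrix.conjTranspose_apply, Matrix.of_apply, RCLike.star_def, conj_ofReal]
    rw [show t j - t i = -(t i - t j) by ring, hev]
  refine Matrix.PosSemidef.of_dotProduct_mulVec_nonneg herm fun x => ?_
  rw [dot_eq_qform, RCLike.nonneg_iff]
  exact ⟨h n t x, Complex.conj_eq_iff_im.mp (conj_qform hev t x)⟩

lemma pd_even {f : ℝ → ℝ} (hf : PD f) : ∀ t, f (-t) = f t := by
  intro s
  have h := (hf 2 ![s, 0]).1
  have h2 := congrFun (congrFun h 1) 0
  simpa [Matrix.conjTranspose_apply, conj_ofReal, Complex.ofReal_inj] using h2.symm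

lemma pd_qform_nonneg {f : ℝ → ℝ} (hf : PD f) {n : ℕ} (t : Fin n → ℝ) (x : Fin n → ℂ) :
    0 ≤ (qform f t x).re := by
  have := (hf n t).re_dotProduct_nonneg x
  rwa [dot_eq_qform] at this

lemma pd_const {c : ℝ} (hc : 0 ≤ c) : PD (fun _ => c) := by
  refine pd_of_qform (fun _ => rfl) fun n t x => ?_
  have : qform (fun _ => c) t x = (c : ℂ) * ((starRingEnd ℂ) (∑ j, x j) * (∑ j, x j)) := by
    unfold qform
    rw [map_sum, Finset.sum_mul, Finset.mul_sum]
    refine Finset.sum_congr rfl fun i _ => ?_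
    rw [Finset.mul_sum, Finset.mul_sum]
    exact Finset.sum_congr rfl fun j _ => by ring
  rw [this, Complex.conj_mul']
  rw [← Complex.ofReal_pow, ← Complex.ofReal_mul]
  simp only [Complex.ofReal_re]
  positivity

lemma pd_add {f g : ℝ → ℝ} (hf : PD f) (hg : PD g) : PD (fun t => f t + g t) := by
  refine pd_of_qform (fun t => by rw [pd_even hf, pd_even hg]) fun n t x => ?_
  have : qform (fun t => f t + g t) t x = qform f t x + qform g t x := by
    unfold qform
    rw [← Finset.sum_add_distrib]
    refine Finset.sum_congr rfl fun i _ => ?_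
    rw [← Finset.sum_add_distrib]
    refine Finset.sum_congr rfl fun j _ => ?_
    push_cast; ring
  rw [this, Complex.add_re]
  exact add_nonneg (pd_qform_nonneg hf t x) (pd_qform_nonneg hg t x)

lemma pd_smul {c : ℝ} (hc : 0 ≤ c) {f : ℝ → ℝ} (hf : PD f) : PD (fun t => c * f t) := by
  refine pd_of_qform (fun t => by rw [pd_even hf]) fun n t x => ?_
  have : qform (fun t => c * f t) t x = (c : ℂ) * qform f t x := by
    unfold qform
    rw [Finset.mul_sum]
    refine Finset.sum_congr rfl fun i _ => ?_
    rw [Finset.mul_sum]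
    refine Finset.sum_congr rfl fun j _ => ?_
    push_cast; ring
  rw [this, Complex.mul_re, Complex.ofReal_re, Complex.ofReal_im]
  simp only [zero_mul, sub_zero]
  exact mul_nonneg hc (pd_qform_nonneg hf t x)

lemma qform_def {n : ℕ} (f : ℝ → ℝ) (t : Fin n → ℝ) (x : Fin n → ℂ) :
  qform f t x = ∑ i, ∑ j, (starRingEnd ℂ) (x i) * ((f (t i - t j) : ℂ) * x j) := rfl

lemma pd_mul (hf : PD f) (hg : PD g) : PD (fun t => f t * g t) := by
  refine pd_of_qform (fun t => by simp only [pd_even hf, pd_even hg]) fun n t x => ?_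
  open scoped MatrixOrder in
  obtain ⟨B, hB⟩ := CStarAlgebra.nonneg_iff_eq_star_mul_self.mp (hg n t).nonneg
  have hg' : ∀ i j, (g (t i - t j) : ℂ) = ∑ k, (starRingEnd ℂ) (B k i) * B k j := by
    intro i j
    have h2 := congrFun (congrFun hB i) j
    simpa [Matrix.mul_apply, Matrix.conjTranspose_apply] using h2
  have key : ∑ k, qform f t (fun i => x i * B k i)
      = qform (fun t => f t * g t) t x := by
    simp only [qform_def]
    rw [Finset.sum_comm]
    refine Finset.sum_congr rfl fun i _ => ?_
    rw [Finset.sum_comm]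
    refine Finset.sum_congr rfl fun j _ => ?_
    rw [Complex.ofReal_mul, hg' i j, Finset.mul_sum, Finset.sum_mul, Finset.mul_sum]
    refine Finset.sum_congr rfl fun k _ => ?_
    simp only [_root_.map_mul]
    ring
  rw [← key, Complex.re_sum]
  exact Finset.sum_nonneg fun k _ => pd_qform_nonneg hf t _

lemma pd_lim {F : ℕ → ℝ → ℝ} (hF : ∀ N, PD (F N))
    (h : ∀ t, Filter.Tendsto (fun N => F N t) Filter.atTop (nhds (f t))) : PD f := by
  have hev : ∀ t, f (-t) = f t := fun t =>
    tendsto_nhds_unique (((h (-t)).congr (fun N => pd_even (hF N) t))) (h t)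
  refine pd_of_qform hev fun n t x => ?_
  have hq : Filter.Tendsto (fun N => (qform (F N) t x).re) Filter.atTop
      (nhds ((qform f t x).re)) := by
    simp only [qform_def]
    rw [show ((∑ i, ∑ j, (starRingEnd ℂ) (x i) * ((f (t i - t j) : ℂ) * x j)).re)
      = ∑ i, ∑ j, ((starRingEnd ℂ) (x i) * ((f (t i - t j) : ℂ) * x j)).re by
        rw [Complex.re_sum]; exact Finset.sum_congr rfl fun i _ => Complex.re_sum _ _]
    simp only [Complex.re_sum]
    refine tendsto_finset_sum _ fun i _ => tendsto_finset_sum _ fun j _ => ?_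
    apply (Complex.continuous_re.tendsto _).comp
    exact Filter.Tendsto.mul tendsto_const_nhds
      (Filter.Tendsto.mul ((Complex.continuous_ofReal.tendsto _).comp (h _)) tendsto_const_nhds)
  exact ge_of_tendsto' hq fun N => pd_qform_nonneg (hF N) t x

lemma integrable_exp_cos (b : ℝ) : IntegrableOn (fun u => Real.exp (-u) * Real.cos (b*u)) (Ioi 0) := by
  refine Integrable.mono' (g := fun u => Real.exp (-u)) ?_ ?_ ?_
  · exact (by simpa using exp_neg_integrableOn_Ioi 0 one_pos : IntegrableOn (fun u => Real.exp (-u)) (Ioi 0))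
  · exact (Real.continuous_exp.comp continuous_neg).mul
      (Real.continuous_cos.comp (continuous_const.mul continuous_id)) |>.aestronglyMeasurable
  · filter_upwards with u
    rw [norm_mul, Real.norm_eq_abs, Real.norm_eq_abs, Real.abs_exp]
    nlinarith [abs_cos_le_one (b*u), Real.exp_pos (-u), abs_nonneg (Real.cos (b*u))]

lemma int_exp_cos (b : ℝ) :
    ∫ u in Ioi (0:ℝ), Real.exp (-u) * Real.cos (b*u) = 1/(1+b^2) := by
  have hD : ∀ u : ℝ, HasDerivAt (fun u => Real.exp (-u) * (b * Real.sin (b*u) - Real.cos (b*u)) / (1+b^2))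
      (Real.exp (-u) * Real.cos (b*u)) u := by
    intro u
    have h1 : HasDerivAt (fun u : ℝ => Real.exp (-u)) (-Real.exp (-u)) u := by
      have h := (Real.hasDerivAt_exp (-u)).comp u (hasDerivAt_neg u)
      simp at h; exact h
    have h2 : HasDerivAt (fun u : ℝ => Real.sin (b*u)) (Real.cos (b*u) * b) u :=
      by have h := (Real.hasDerivAt_sin (b*u)).comp u ((hasDerivAt_id u).const_mul b); simp at h; exact h
    have h3 : HasDerivAt (fun u : ℝ => Real.cos (b*u)) (-Real.sin (b*u) * b) u :=
      by have h := (Real.hasDerivAt_cos (b*u)).comp u ((hasDerivAt_id u).const_mul b); simp at h; rw [neg_mul]; exact h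
    have h4 := ((h1.mul ((h2.const_mul b).sub h3)).div_const (1+b^2))
    refine h4.congr_deriv ?_
    have hb : 1 + b^2 ≠ 0 := by positivity
    simp only [Pi.sub_apply]
    rw [div_eq_iff hb]
    ring
  have htend : Tendsto (fun u => Real.exp (-u) * (b * Real.sin (b*u) - Real.cos (b*u)) / (1+b^2))
      atTop (nhds 0) := by
    rw [tendsto_zero_iff_norm_tendsto_zero]
    refine squeeze_zero (fun u => norm_nonneg _)
      (g := fun u => Real.exp (-u) * (|b| + 1) / (1+b^2)) ?_ ?_
    · intro u
      rw [norm_div, norm_mul, Real.norm_eq_abs, Real.norm_eq_abs, Real.norm_eq_abs, Real.abs_exp]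
      rw [abs_of_pos (by positivity : (0:ℝ) < 1 + b^2)]
      have : |b * Real.sin (b*u) - Real.cos (b*u)| ≤ |b| + 1 := by
        refine (abs_sub _ _).trans ?_
        rw [abs_mul]
        nlinarith [abs_sin_le_one (b*u), abs_cos_le_one (b*u), abs_nonneg b,
          abs_nonneg (Real.sin (b*u)), abs_nonneg (Real.cos (b*u))]
      have h0 := Real.exp_pos (-u)
      apply div_le_div_of_nonneg_right ?_ (by positivity)
      · nlinarith
    · rw [show (0:ℝ) = 0 * (|b|+1) / (1+b^2) by ring]
      exact (Real.tendsto_exp_neg_atTop_nhds_zero.mul_const _).div_const _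
  have hcont : ContinuousWithinAt (fun u => Real.exp (-u) * (b * Real.sin (b*u) - Real.cos (b*u)) / (1+b^2)) (Ici 0) 0 :=
    (hD 0).continuousAt.continuousWithinAt
  have := MeasureTheory.integral_Ioi_of_hasDerivAt_of_tendsto hcont
    (fun x _ => hD x) (integrable_exp_cos b) htend
  rw [this]
  simp
  ring

lemma qform_re {n : ℕ} (f : ℝ → ℝ) (t : Fin n → ℝ) (x : Fin n → ℂ) :
    (qform f t x).re = ∑ i, ∑ j,
      f (t i - t j) * ((x i).re * (x j).re + (x i).im * (x j).im) := by
  rw [qform_def, Complex.re_sum]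
  refine Finset.sum_congr rfl fun i _ => ?_
  rw [Complex.re_sum]
  refine Finset.sum_congr rfl fun j _ => ?_
  simp [Complex.mul_re, Complex.mul_im]
  ring

lemma pd_base {c : ℝ} (hc : 0 < c) : PD (fun s => c^2/(c^2+s^2)) := by
  refine pd_of_qform (fun t => by rw [neg_sq]) fun n t x => ?_
  have hf : ∀ s : ℝ, c^2/(c^2+s^2) = ∫ u in Ioi (0:ℝ), Real.exp (-u) * Real.cos ((s/c)*u) := by
    intro s
    rw [int_exp_cos (s/c), div_pow]
    rw [show 1 + s^2/c^2 = (c^2+s^2)/c^2 by field_simp]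
    rw [one_div_div]
  rw [qform_re]
  set a : Fin n → ℝ := fun i => (x i).re
  set b : Fin n → ℝ := fun i => (x i).im
  have step1 : ∑ i, ∑ j, (c^2/(c^2+(t i - t j)^2)) * (a i * a j + b i * b j)
      = ∫ u in Ioi (0:ℝ), ∑ i, ∑ j,
          (Real.exp (-u) * Real.cos (((t i - t j)/c)*u)) * (a i * a j + b i * b j) := by
    rw [MeasureTheory.integral_finset_sum _
      (fun i _ => integrable_finset_sum _ (fun j _ => (integrable_exp_cos _).mul_const _))]
    refine Finset.sum_congr rfl fun i _ => ?_
    rw [MeasureTheory.integral_finset_sum _ (fun j _ => (integrable_exp_cos _).mul_const _)]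
    refine Finset.sum_congr rfl fun j _ => ?_
    rw [hf (t i - t j), ← MeasureTheory.integral_mul_const]
  rw [step1]
  refine MeasureTheory.setIntegral_nonneg measurableSet_Ioi fun u _ => ?_
  have key : ∑ i, ∑ j, (Real.exp (-u) * Real.cos (((t i - t j)/c)*u)) * (a i * a j + b i * b j)
      = Real.exp (-u) * ((∑ i, a i * Real.cos (t i * (u/c)))^2
        + (∑ i, a i * Real.sin (t i * (u/c)))^2
        + (∑ i, b i * Real.cos (t i * (u/c)))^2
        + (∑ i, b i * Real.sin (t i * (u/c)))^2) := by
    set cc : Fin n → ℝ := fun i => Real.cos (t i * (u/c))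
    set ss : Fin n → ℝ := fun i => Real.sin (t i * (u/c))
    calc ∑ i, ∑ j, (Real.exp (-u) * Real.cos (((t i - t j)/c)*u)) * (a i * a j + b i * b j)
        = ∑ i, ∑ j, Real.exp (-u) *
            ((a i * cc i) * (a j * cc j) + ((a i * ss i) * (a j * ss j)
              + ((b i * cc i) * (b j * cc j) + (b i * ss i) * (b j * ss j)))) := by
          refine Finset.sum_congr rfl fun i _ => Finset.sum_congr rfl fun j _ => ?_
          rw [show ((t i - t j)/c)*u = t i * (u/c) - t j * (u/c) by ring, Real.cos_sub]
          simp only [cc, ss]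
          ring
      _ = Real.exp (-u) * ((∑ i, a i * cc i)^2 + (∑ i, a i * ss i)^2
            + (∑ i, b i * cc i)^2 + (∑ i, b i * ss i)^2) := by
          simp only [← Finset.mul_sum, sq, Finset.sum_mul_sum, Finset.sum_add_distrib]
          ring
  rw [key]
  positivity

noncomputable def gg (x : ℝ) : ℝ := if x = 0 then 1 else Real.sinh x / x

lemma gg_pos (x : ℝ) : 0 < gg x := by
  unfold gg
  split_ifs with h
  · norm_num
  · rcases lt_or_gt_of_ne h with h' | h'
    · have : Real.sinh x < 0 := by simpa using Real.sinh_lt_sinh.mpr h'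
      exact div_pos_of_neg_of_neg this h'
    · exact div_pos (by simpa using Real.sinh_lt_sinh.mpr h') h'

lemma gg_cont : Continuous gg := by
  rw [continuous_iff_continuousAt]
  intro x
  by_cases hx : x = 0
  · subst hx
    rw [← continuousWithinAt_compl_self]
    have h1 : Filter.Tendsto (fun y : ℝ => Real.sinh y / y) (nhdsWithin 0 {(0:ℝ)}ᶜ) (nhds 1) := by
      have := hasDerivAt_iff_tendsto_slope.mp (Real.hasDerivAt_sinh 0)
      simp only [Real.cosh_zero] at this
      refine this.congr fun y => ?_
      simp [slope_def_field, Real.sinh_zero]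
    have : Filter.Tendsto gg (nhdsWithin 0 {(0:ℝ)}ᶜ) (nhds 1) := by
      refine h1.congr' ?_
      filter_upwards [self_mem_nhdsWithin] with y hy
      simp [gg, show y ≠ 0 from hy]
    simpa [ContinuousWithinAt, gg] using this
  · have hev : gg =ᶠ[nhds x] fun y => Real.sinh y / y := by
      filter_upwards [isOpen_compl_singleton.mem_nhds hx] with y hy
      simp [gg, show y ≠ 0 from hy]
    exact (ContinuousAt.congr (Real.continuous_sinh.continuousAt.div
      continuousAt_id hx) hev.symm)

lemma tendsto_P (x : ℝ) :
    Filter.Tendsto (fun N => ∏ j ∈ Finset.range N, (1 + x^2/((j+1)^2 * π^2)))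
      Filter.atTop (nhds (gg x)) := by
  by_cases hx : x = 0
  · subst hx
    simpa [gg] using tendsto_const_nhds (α := ℕ) (f := Filter.atTop) (a := (1:ℝ))
  · have hz := Complex.tendsto_euler_sin_prod ((x/π : ℝ) * Complex.I)
    have hπ : (π : ℂ) ≠ 0 := Complex.ofReal_ne_zero.mpr Real.pi_ne_zero
    have hzz : (π : ℂ) * ((x/π : ℝ) * Complex.I) = (x:ℂ) * Complex.I := by
      push_cast
      field_simp
    rw [hzz, Complex.sin_mul_I] at hz
    have key : ∀ N : ℕ, ((x:ℂ) * Complex.I *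
        ∏ j ∈ Finset.range N, (1 - ((x/π : ℝ) * Complex.I)^2 / ((j:ℂ)+1)^2)).im
        = x * ∏ j ∈ Finset.range N, (1 + x^2/((j+1)^2 * π^2)) := by
      intro N
      have hprod : ∏ j ∈ Finset.range N, ((1:ℂ) - ((x/π : ℝ) * Complex.I)^2 / ((j:ℂ)+1)^2)
          = ((∏ j ∈ Finset.range N, (1 + x^2/((j+1)^2 * π^2)) : ℝ) : ℂ) := by
        rw [Complex.ofReal_prod]
        refine Finset.prod_congr rfl fun j _ => ?_
        have hI : ((x:ℂ)/(π:ℂ) * Complex.I)^2 = -((x:ℂ)^2/(π:ℂ)^2) := by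
          rw [mul_pow, Complex.I_sq]
          ring
        push_cast
        rw [hI]
        have hj : ((j:ℂ)+1)^2 ≠ 0 := by
          intro h
          have := pow_eq_zero_iff (n := 2) (by norm_num) |>.mp h
          have h2 : (0:ℝ) < (j:ℝ) + 1 := by positivity
          rw [show ((j:ℂ)+1) = (((j:ℝ)+1 : ℝ) : ℂ) by push_cast; ring] at this
          exact h2.ne' (by exact_mod_cast this)
        field_simp
        ring
      rw [hprod]
      set r : ℝ := ∏ j ∈ Finset.range N, (1 + x^2/((j+1)^2 * π^2)) with hr
      rw [show (x:ℂ) * Complex.I * (r:ℂ) = ((x*r : ℝ) : ℂ) * Complex.I by push_cast; ring]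
      simp
    have h3 : Filter.Tendsto (fun N => ((x:ℂ) * Complex.I *
        ∏ j ∈ Finset.range N, (1 - ((x/π : ℝ) * Complex.I)^2 / ((j:ℂ)+1)^2)).im)
        Filter.atTop (nhds ((Complex.sinh (x:ℂ) * Complex.I).im)) :=
      (Complex.continuous_im.tendsto _).comp hz
    have h4 : (Complex.sinh (x:ℂ) * Complex.I).im = Real.sinh x := by
      rw [← Complex.ofReal_sinh]
      simp [Complex.mul_im, Complex.sinh_ofReal_re]
    rw [h4] at h3
    have h2 := h3.congr key
    have hx' := h2.div_const x
    simp only [mul_div_cancel_left₀ _ hx] at hx'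
    have hgx : Real.sinh x / x = gg x := by simp [gg, hx]
    rwa [hgx] at hx'

lemma gg_def (x : ℝ) : gg x = if x = 0 then 1 else Real.sinh x / x := rfl

lemma pd_ratio {k a b : ℝ} (hk : 0 < k) (ha : 0 ≤ a) (hab : a ≤ b) (hb : 0 < b) :
    PD (fun t => (k + a^2*t^2)/(k + b^2*t^2)) := by
  have hc : (0:ℝ) < Real.sqrt k / b := div_pos (Real.sqrt_pos.mpr hk) hb
  have hfun : (fun t : ℝ => (k + a^2*t^2)/(k + b^2*t^2))
      = fun t => a^2/b^2 + (1 - a^2/b^2) * ((Real.sqrt k / b)^2/((Real.sqrt k / b)^2 + t^2)) := by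
    funext t
    rw [div_pow, Real.sq_sqrt hk.le]
    have h1 : k + b^2*t^2 > 0 := by positivity
    have h2 : k/b^2 + t^2 > 0 := by positivity
    field_simp
    ring
  rw [hfun]
  refine pd_add (pd_const (by positivity)) (pd_smul ?_ (pd_base hc))
  have h2 : a^2 ≤ b^2 := by nlinarith
  have hb2 : (0:ℝ) < b^2 := by positivity
  have := (div_le_one hb2).mpr h2
  linarith

noncomputable def qq (a b t : ℝ) : ℝ := (a * gg (a*t)) / (b * gg (b*t))

lemma pd_prod {f : ℕ → ℝ → ℝ} (h : ∀ j, PD (f j)) (N : ℕ) :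
    PD (fun t => ∏ j ∈ Finset.range N, f j t) := by
  induction N with
  | zero => simpa using pd_const (le_of_lt one_pos)
  | succ N ih =>
    simp only [Finset.prod_range_succ]
    exact pd_mul ih (h N)

lemma pd_qq {a b : ℝ} (ha : 0 ≤ a) (hab : a ≤ b) (hb : 0 < b) : PD (qq a b) := by
  refine pd_lim (F := fun N t => (a/b) *
    ∏ j ∈ Finset.range N, (((j+1)^2*π^2) + a^2*t^2)/(((j+1)^2*π^2) + b^2*t^2)) ?_ ?_
  · intro N
    exact pd_smul (by positivity) (pd_prod (fun j => pd_ratio (by positivity) ha hab hb) N)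
  · intro t
    have hfac : ∀ (N : ℕ),
        ∏ j ∈ Finset.range N, (((j+1)^2*π^2) + a^2*t^2)/(((j+1)^2*π^2) + b^2*t^2)
        = (∏ j ∈ Finset.range N, (1 + (a*t)^2/((j+1)^2 * π^2)))
          / (∏ j ∈ Finset.range N, (1 + (b*t)^2/((j+1)^2 * π^2))) := by
      intro N
      rw [← Finset.prod_div_distrib]
      refine Finset.prod_congr rfl fun j _ => ?_
      have hj : ((j:ℝ)+1)^2*π^2 > 0 := by positivity
      rw [div_eq_div_iff (by positivity) (by positivity)]
      field_simp
    have hden : 0 < b * gg (b*t) := mul_pos hb (gg_pos _)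
    have h1 := ((tendsto_P (a*t)).div (tendsto_P (b*t)) (gg_pos (b*t)).ne').const_mul (a/b)
    have heq : (a/b) * (gg (a*t) / gg (b*t)) = qq a b t := by
      unfold qq
      rw [div_mul_div_comm]
    rw [heq] at h1
    refine h1.congr fun N => ?_
    simp only [Pi.div_apply]
    rw [hfac N]

lemma qq_cont {a b : ℝ} (hb : 0 < b) : Continuous (qq a b) := by
  unfold qq
  refine Continuous.div (continuous_const.mul (gg_cont.comp (continuous_const.mul continuous_id)))
    (continuous_const.mul (gg_cont.comp (continuous_const.mul continuous_id))) ?_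
  intro t
  exact (mul_pos hb (gg_pos (b*t))).ne'

lemma qq_zero (a b : ℝ) : qq a b 0 = a/b := by
  unfold qq
  simp [gg_def]

lemma qq_ne (a b t : ℝ) (ht : t ≠ 0) (hb : b ≠ 0) :
    qq a b t = Real.sinh (a*t) / Real.sinh (b*t) := by
  have key : ∀ c : ℝ, c * gg (c*t) = Real.sinh (c*t) / t := by
    intro c
    rcases eq_or_ne c 0 with rfl | hc
    · simp
    · rw [gg_def, if_neg (mul_ne_zero hc ht)]
      field_simp
  unfold qq
  rw [key a, key b]
  rw [div_div_div_cancel_right₀]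
  exact ht

lemma expm1 (t γ : ℝ) : Real.exp (2*t*γ) - 1 = Real.exp (γ*t) * (2 * Real.sinh (γ*t)) := by
  rw [Real.sinh_eq]
  have h1 : Real.exp (γ*t) * Real.exp (γ*t) = Real.exp (2*t*γ) := by
    rw [← Real.exp_add]; ring_nf
  have h2 : Real.exp (γ*t) * Real.exp (-(γ*t)) = 1 := by
    rw [← Real.exp_add]; simp
  nlinarith [h1, h2]

lemma phi_eq {α β t : ℝ} (hα0 : 0 < α) (hβ0 : 0 < β) (hβ1 : β < 1) (ht : t ≠ 0) :
    Mmean β (Real.exp (2*t)) 1 / Gmean α (Real.exp (2*t)) 1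
      = ((1-β)/(α*β)) * (Real.sinh (β*t) * Real.sinh (α*t))
        / (Real.sinh ((1-β)*t) * Real.sinh t) := by
  have hx1 : Real.exp (2*t) ≠ 1 := by
    intro h
    rw [show (1:ℝ) = Real.exp 0 by simp, Real.exp_eq_exp] at h
    exact ht (by linarith)
  have hpow : ∀ γ : ℝ, Real.exp (2*t) ^ γ = Real.exp (2*t*γ) := fun γ => by
    rw [Real.rpow_def_of_pos (Real.exp_pos _), Real.log_exp]
  rw [Mmean, if_neg hx1, Gmean, if_neg hx1, if_neg hα0.ne']
  rw [mul_one, Real.one_rpow, Real.one_rpow, Real.one_rpow]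
  rw [hpow, hpow, hpow, hpow]
  have e1 := expm1 t β
  have e2 := expm1 t (β-1)
  have e3 := expm1 t α
  have e4 : Real.exp (2*t) - 1 = Real.exp t * (2 * Real.sinh t) := by
    have := expm1 t 1
    simpa using this
  rw [show 2*t*(α/2) = α*t by ring, e1, e2, e3, e4]
  rw [show Real.sinh ((β-1)*t) = -Real.sinh ((1-β)*t) by
    rw [show (β-1)*t = -((1-β)*t) by ring, Real.sinh_neg]]
  rw [show Real.exp ((β-1)*t) = Real.exp (β*t) / Real.exp t by
    rw [← Real.exp_sub]; ring_nf]
  have hs1 : Real.sinh t ≠ 0 := Real.sinh_ne_zero.mpr ht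
  have hsc : Real.sinh ((1-β)*t) ≠ 0 :=
    Real.sinh_ne_zero.mpr (mul_ne_zero (by linarith : (1:ℝ)-β ≠ 0) ht)
  have hsa : Real.sinh (α*t) ≠ 0 := Real.sinh_ne_zero.mpr (mul_ne_zero hα0.ne' ht)
  have he : ∀ s : ℝ, Real.exp s ≠ 0 := fun s => (Real.exp_pos s).ne'
  field_simp
  ring

end Aux

/-- For `0 < α ≤ 1` and `0 < β < 1` with `β + α/2 ≤ 1`, the function
`t ↦ M_β(e^{2t},1)/G_α(e^{2t},1)` (with value `1` at `t = 0`) is positive definite.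
(In particular for `α = 1/m`, `β = m/(m+1)`, `m ≥ 1`.) -/
theorem statement6 (α β : ℝ) (hα0 : 0 < α) (hα1 : α ≤ 1) (hβ0 : 0 < β) (hβ1 : β < 1)
    (hβα : β + α / 2 ≤ 1)
    (φ : ℝ → ℝ) (hφ0 : φ 0 = 1)
    (hφ : ∀ t : ℝ, t ≠ 0 →
      φ t = Mmean β (Real.exp (2 * t)) 1 / Gmean α (Real.exp (2 * t)) 1) :
    IsPosDefFun φ := by
  have h1β : (0:ℝ) < 1 - β := by linarith
  have hC : (0:ℝ) < (1-β)/(α*β) := div_pos h1β (by positivity)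
  by_cases hβh : β ≤ 1/2
  · have hfun : φ = fun t => ((1-β)/(α*β)) * (qq β (1-β) t * qq α 1 t) := by
      funext t
      rcases eq_or_ne t 0 with rfl | ht
      · rw [hφ0, qq_zero, qq_zero]
        field_simp
      · rw [hφ t ht, phi_eq hα0 hβ0 hβ1 ht, qq_ne β (1-β) t ht h1β.ne',
          qq_ne α 1 t ht one_ne_zero, one_mul]
        rw [div_mul_div_comm, mul_div_assoc]
    constructor
    · rw [hfun]
      exact continuous_const.mul ((qq_cont h1β).mul (qq_cont one_pos))
    · rw [hfun]
      exact pd_smul hC.le (pd_mul (pd_qq hβ0.le (by linarith) h1β)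
        (pd_qq hα0.le hα1 one_pos))
  · push_neg at hβh
    have hfun : φ = fun t => ((1-β)/(α*β)) * ((1 + qq (2*β-1) 1 t) * qq α (2-2*β) t) := by
      funext t
      rcases eq_or_ne t 0 with rfl | ht
      · rw [hφ0, qq_zero, qq_zero, div_one, show 1 + (2*β-1) = 2*β by ring]
        have h2 : (2:ℝ) - 2*β ≠ 0 := by linarith
        field_simp
      · rw [hφ t ht, phi_eq hα0 hβ0 hβ1 ht, qq_ne (2*β-1) 1 t ht one_ne_zero,
          qq_ne α (2-2*β) t ht (by linarith : (2:ℝ)-2*β ≠ 0), one_mul]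
        have e1 : Real.sinh ((2-2*β)*t) = 2 * Real.sinh ((1-β)*t) * Real.cosh ((1-β)*t) := by
          rw [show (2-2*β)*t = 2*((1-β)*t) by ring, Real.sinh_two_mul]
        have e2 : Real.sinh ((2*β-1)*t)
            = 2*Real.sinh (β*t)*Real.cosh ((1-β)*t) - Real.sinh (β*t + (1-β)*t) := by
          rw [show (2*β-1)*t = β*t - (1-β)*t by ring, Real.sinh_sub, Real.sinh_add]
          ring
        rw [show β*t + (1-β)*t = t by ring] at e2
        rw [e1, e2]
        have hs1 : Real.sinh t ≠ 0 := Real.sinh_ne_zero.mpr ht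
        have hsc : Real.sinh ((1-β)*t) ≠ 0 :=
          Real.sinh_ne_zero.mpr (mul_ne_zero h1β.ne' ht)
        have hcc : Real.cosh ((1-β)*t) ≠ 0 := ne_of_gt (Real.cosh_pos _)
        field_simp
        ring
    constructor
    · rw [hfun]
      exact continuous_const.mul ((continuous_const.add (qq_cont one_pos)).mul
        (qq_cont (by linarith)))
    · rw [hfun]
      exact pd_smul hC.le (pd_mul (pd_add (pd_const one_pos.le)
        (pd_qq (by linarith) (by linarith) one_pos))
        (pd_qq hα0.le (by linarith) (by linarith)))
end

section
/- For every natural number m ≥ 1 and all x, y > 0: M_{m/(m+1)}(x,y) ≤ G_{1/m}(x,y) ≤ LM(x,y) ≤ A_{1/m}(x,y) ≤ M_{(m+1)/m}(x,y). -/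
open scoped ComplexOrder

lemma LM_symm (x y : ℝ) : LM x y = LM y x := by
  unfold LM
  rcases eq_or_ne x y with h | h
  · simp [h]
  · rw [if_neg h, if_neg (Ne.symm h), show y - x = -(x - y) by ring,
      show Real.log y - Real.log x = -(Real.log x - Real.log y) by ring, neg_div_neg_eq]

lemma Amean_symm (α x y : ℝ) : Amean α x y = Amean α y x := by
  unfold Amean
  rcases eq_or_ne x y with h | h
  · simp [h]
  · rw [if_neg h, if_neg (Ne.symm h)]
    rcases eq_or_ne α 0 with h0 | h0
    · simp [h0, LM_symm x y]
    · rw [if_neg h0, if_neg h0,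
        show α * (y ^ α + x ^ α) * (y - x) = -(α * (x ^ α + y ^ α) * (x - y)) by ring,
        show 2 * (y ^ α - x ^ α) = -(2 * (x ^ α - y ^ α)) by ring, neg_div_neg_eq]

lemma Gmean_symm (α x y : ℝ) : Gmean α x y = Gmean α y x := by
  unfold Gmean
  rcases eq_or_ne x y with h | h
  · simp [h]
  · rw [if_neg h, if_neg (Ne.symm h)]
    rcases eq_or_ne α 0 with h0 | h0
    · simp [h0, LM_symm x y]
    · rw [if_neg h0, if_neg h0, mul_comm y x,
        show α * (x * y) ^ (α / 2) * (y - x) = -(α * (x * y) ^ (α / 2) * (x - y)) by ring,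
        show y ^ α - x ^ α = -(x ^ α - y ^ α) by ring, neg_div_neg_eq]

lemma Mmean_symm (α x y : ℝ) : Mmean α x y = Mmean α y x := by
  unfold Mmean
  rcases eq_or_ne x y with h | h
  · simp [h]
  · rw [if_neg h, if_neg (Ne.symm h),
      show (α - 1) / α * (y ^ α - x ^ α) = -((α - 1) / α * (x ^ α - y ^ α)) by ring,
      show y ^ (α - 1) - x ^ (α - 1) = -(x ^ (α - 1) - y ^ (α - 1)) by ring, neg_div_neg_eq]

section aux
open Real Finset



lemma sinh_le_mul_cosh {x : ℝ} (hx : 0 ≤ x) : Real.sinh x ≤ x * Real.cosh x := by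
  have hder : ∀ y : ℝ, HasDerivAt (fun z => z * Real.cosh z - Real.sinh z) (y * Real.sinh y) y := by
    intro y
    have h1 : HasDerivAt (fun z : ℝ => z * Real.cosh z) (1 * Real.cosh y + y * Real.sinh y) y :=
      (hasDerivAt_id y).mul (Real.hasDerivAt_cosh y)
    have h2 := h1.sub (Real.hasDerivAt_sinh y)
    exact h2.congr_deriv (by ring)
  have hmono : MonotoneOn (fun z => z * Real.cosh z - Real.sinh z) (Set.Ici 0) := by
    apply monotoneOn_of_deriv_nonneg (convex_Ici 0)
    · exact ((continuous_id.mul Real.continuous_cosh).sub Real.continuous_sinh).continuousOn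
    · intro y _
      exact (hder y).differentiableAt.differentiableWithinAt
    · intro y hy
      rw [interior_Ici] at hy
      rw [(hder y).deriv]
      exact mul_nonneg hy.le (Real.sinh_nonneg_iff.mpr hy.le)
  have := hmono Set.self_mem_Ici hx hx
  simp only [Real.sinh_zero, Real.cosh_zero, mul_one, zero_mul, sub_zero] at this
  linarith

lemma key1 {u : ℝ} (hu : 1 < u) : u ^ ((1:ℝ)/2) * Real.log u ≤ u - 1 := by
  set v := Real.log u / 2 with hv
  have hv0 : 0 < v := by
    have := Real.log_pos hu
    positivity
  have hE : u ^ ((1:ℝ)/2) = Real.exp v := by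
    rw [Real.rpow_def_of_pos (by linarith : (0:ℝ) < u)]
    congr 1; rw [hv]; ring
  have hu' : u = Real.exp v * Real.exp v := by
    rw [← Real.exp_add]
    rw [show v + v = Real.log u by rw [hv]; ring]
    exact (Real.exp_log (by linarith)).symm
  have hsinh := Real.self_lt_sinh_iff.mpr hv0
  rw [Real.sinh_eq] at hsinh
  have hEp : 0 < Real.exp v := Real.exp_pos v
  have hEE : Real.exp v * Real.exp (-v) = 1 := by rw [← Real.exp_add]; simp
  have hlog : Real.log u = 2 * v := by rw [hv]; ring
  rw [hlog, hE, hu']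
  nlinarith [mul_lt_mul_of_pos_left hsinh hEp]

lemma key2 {u : ℝ} (hu : 1 < u) : 2 * (u - 1) ≤ (u + 1) * Real.log u := by
  set v := Real.log u / 2 with hv
  have hv0 : 0 < v := by
    have := Real.log_pos hu
    positivity
  have hu' : u = Real.exp v * Real.exp v := by
    rw [← Real.exp_add]
    rw [show v + v = Real.log u by rw [hv]; ring]
    exact (Real.exp_log (by linarith)).symm
  have h := sinh_le_mul_cosh hv0.le
  rw [Real.sinh_eq, Real.cosh_eq] at h
  have hEp : 0 < Real.exp v := Real.exp_pos v
  have hEE : Real.exp v * Real.exp (-v) = 1 := by rw [← Real.exp_add]; simp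
  have hlog : Real.log u = 2 * v := by rw [hv]; ring
  rw [hlog, hu']
  nlinarith [mul_le_mul_of_nonneg_left h hEp.le]



lemma spread {p q r s : ℝ} (hp : 0 < p) (hpr : p ≤ r) (hps : p ≤ s)
    (h : p * q = r * s) : r + s ≤ p + q := by
  nlinarith [mul_nonneg (sub_nonneg.2 hpr) (sub_nonneg.2 hps)]

lemma rpow_pair_le {T a1 a2 b1 b2 : ℝ} (hT : 1 ≤ T) (hsum : a1 + a2 = b1 + b2)
    (h1 : min b1 b2 ≤ a1) (h2 : min b1 b2 ≤ a2) :
    T ^ a1 + T ^ a2 ≤ T ^ b1 + T ^ b2 := by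
  have hT0 : (0:ℝ) < T := lt_of_lt_of_le one_pos hT
  rcases le_total b1 b2 with h | h
  · rw [min_eq_left h] at h1 h2
    have := spread (p := T ^ b1) (q := T ^ b2) (r := T ^ a1) (s := T ^ a2)
      (Real.rpow_pos_of_pos hT0 _)
      (Real.rpow_le_rpow_of_exponent_le hT h1)
      (Real.rpow_le_rpow_of_exponent_le hT h2)
      (by rw [← Real.rpow_add hT0, ← Real.rpow_add hT0, hsum])
    linarith
  · rw [min_eq_right h] at h1 h2
    have := spread (p := T ^ b2) (q := T ^ b1) (r := T ^ a1) (s := T ^ a2)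
      (Real.rpow_pos_of_pos hT0 _)
      (Real.rpow_le_rpow_of_exponent_le hT h1)
      (Real.rpow_le_rpow_of_exponent_le hT h2)
      (by rw [← Real.rpow_add hT0, ← Real.rpow_add hT0, hsum]; ring_nf)
    linarith

lemma key3 (m : ℕ) (hm : 1 ≤ m) {T : ℝ} (hT : 1 ≤ T) :
    ∑ k ∈ range m, T ^ (((k:ℝ)+1)/((m:ℝ)+1)) ≤
    ∑ k ∈ range m, T ^ (((k:ℝ)+1/2)/(m:ℝ)) := by
  have hM : (1:ℝ) ≤ (m:ℝ) := by exact_mod_cast hm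
  have hM0 : (0:ℝ) < (m:ℝ) := by linarith
  set f : ℕ → ℝ := fun k => T ^ (((k:ℝ)+1)/((m:ℝ)+1)) with hf
  set g : ℕ → ℝ := fun k => T ^ (((k:ℝ)+1/2)/(m:ℝ)) with hg
  have hrf : ∑ k ∈ range m, f (m - 1 - k) = ∑ k ∈ range m, f k :=
    Finset.sum_range_reflect f m
  have hrg : ∑ k ∈ range m, g (m - 1 - k) = ∑ k ∈ range m, g k :=
    Finset.sum_range_reflect g m
  have hterm : ∀ k ∈ range m, f k + f (m - 1 - k) ≤ g k + g (m - 1 - k) := by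
    intro k hk
    rw [Finset.mem_range] at hk
    have hcast : ((m - 1 - k : ℕ) : ℝ) = (m:ℝ) - 1 - (k:ℝ) := by
      have : m - 1 - k = m - (1 + k) := by omega
      rw [this]
      push_cast [Nat.cast_sub (by omega : 1 + k ≤ m)]
      ring
    have hK0 : (0:ℝ) ≤ (k:ℝ) := Nat.cast_nonneg k
    have hKM : (k:ℝ) ≤ (m:ℝ) - 1 := by
      have : (k:ℝ) + 1 ≤ (m:ℝ) := by exact_mod_cast hk
      linarith
    simp only [hf, hg, hcast]
    apply rpow_pair_le hT
    · field_simp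
      ring
    · rcases le_total (2*(k:ℝ)+1) (m:ℝ) with hc | hc
      · apply le_trans (min_le_left _ _)
        rw [div_le_div_iff₀ hM0 (by linarith)]
        nlinarith
      · apply le_trans (min_le_right _ _)
        rw [div_le_div_iff₀ hM0 (by linarith)]
        nlinarith
    · rcases le_total (2*(k:ℝ)+1) (m:ℝ) with hc | hc
      · apply le_trans (min_le_left _ _)
        rw [div_le_div_iff₀ hM0 (by linarith)]
        nlinarith
      · apply le_trans (min_le_right _ _)
        rw [div_le_div_iff₀ hM0 (by linarith)]
        nlinarith
  have hsum := Finset.sum_le_sum hterm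
  rw [Finset.sum_add_distrib, Finset.sum_add_distrib, hrf, hrg] at hsum
  linarith

lemma key4 (m : ℕ) {u : ℝ} (hu : 1 ≤ u) :
    ((m:ℝ)+1) * (u+1) * (∑ k ∈ range m, u^k) ≤
    2*(m:ℝ) * (∑ k ∈ range (m+1), u^k) := by
  have hS2 : 2 * (∑ k ∈ range (m+1), u^k) ≤ ((m:ℝ)+1) * (1 + u^m) := by
    have hrefl : ∑ k ∈ range (m+1), u ^ (m - k) = ∑ k ∈ range (m+1), u ^ k := by
      have := Finset.sum_range_reflect (fun k => u ^ k) (m+1)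
      simpa using this
    have hterm : ∀ k ∈ range (m+1), u^k + u^(m-k) ≤ 1 + u^m := by
      intro k hk
      rw [Finset.mem_range] at hk
      have hkm : k ≤ m := by omega
      have hpow : u^k * u^(m-k) = u^m := by
        rw [← pow_add]; congr 1; omega
      have e1 : (1:ℝ) ≤ u^k := one_le_pow₀ hu
      have e2 : (1:ℝ) ≤ u^(m-k) := one_le_pow₀ hu
      nlinarith [mul_nonneg (sub_nonneg.2 e1) (sub_nonneg.2 e2)]
    have := Finset.sum_le_sum hterm
    rw [Finset.sum_add_distrib, hrefl] at this
    simp only [Finset.sum_const, Finset.card_range, nsmul_eq_mul] at this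
    push_cast at this ⊢
    linarith
  have h1 : ∑ k ∈ range (m+1), u^k = 1 + ∑ k ∈ range m, u^(k+1) := by
    rw [Finset.sum_range_succ']
    simp [add_comm]
  have h2 : ∑ k ∈ range (m+1), u^k = (∑ k ∈ range m, u^k) + u^m := Finset.sum_range_succ _ _
  have h3 : ∑ k ∈ range m, u^(k+1) = u * ∑ k ∈ range m, u^k := by
    rw [Finset.mul_sum]
    apply Finset.sum_congr rfl
    intro k _
    ring
  nlinarith [hS2, h1, h2, h3]



section formulas

variable (m : ℕ) (y T : ℝ)

lemma vals (hm : 1 ≤ m) (hy : 0 < y) (hT : 1 < T) :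
    LM (y*T) y = y * (T - 1) / Real.log T ∧
    Gmean (1/(m:ℝ)) (y*T) y
      = y * (T ^ (1/(2*(m:ℝ))) * (T - 1)) / ((m:ℝ) * (T ^ ((1:ℝ)/m) - 1)) ∧
    Amean (1/(m:ℝ)) (y*T) y
      = y * ((T ^ ((1:ℝ)/m) + 1) * (T - 1)) / (2 * (m:ℝ) * (T ^ ((1:ℝ)/m) - 1)) ∧
    Mmean ((m:ℝ)/((m:ℝ)+1)) (y*T) y
      = y * (T ^ ((1:ℝ)/((m:ℝ)+1)) * ((T ^ ((1:ℝ)/((m:ℝ)+1)))^m - 1))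
        / ((m:ℝ) * (T ^ ((1:ℝ)/((m:ℝ)+1)) - 1)) ∧
    Mmean (((m:ℝ)+1)/(m:ℝ)) (y*T) y
      = y * ((T ^ ((1:ℝ)/m))^(m+1) - 1) / (((m:ℝ)+1) * (T ^ ((1:ℝ)/m) - 1)) := by
  have hT0 : (0:ℝ) < T := by linarith
  have hM : (1:ℝ) ≤ (m:ℝ) := by exact_mod_cast hm
  have hM0 : (0:ℝ) < (m:ℝ) := by linarith
  have hM1 : (0:ℝ) < (m:ℝ) + 1 := by linarith
  set u := T ^ ((1:ℝ)/m) with hu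
  set s := T ^ ((1:ℝ)/((m:ℝ)+1)) with hs
  have hu1 : 1 < u := by
    rw [hu]
    exact Real.one_lt_rpow_iff_of_pos hT0 |>.mpr (Or.inl ⟨hT, by positivity⟩)
  have hs1 : 1 < s := by
    rw [hs]
    exact Real.one_lt_rpow_iff_of_pos hT0 |>.mpr (Or.inl ⟨hT, by positivity⟩)
  have hxy : y < y * T := by nlinarith
  have hne : y * T ≠ y := ne_of_gt hxy
  have hx0 : (0:ℝ) < y * T := by positivity
  have hyc : ∀ c : ℝ, (0:ℝ) < y ^ c := fun c => Real.rpow_pos_of_pos hy c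
  have hmul : ∀ c : ℝ, (y*T) ^ c = y ^ c * T ^ c := fun c =>
    Real.mul_rpow hy.le hT0.le
  refine ⟨?_, ?_, ?_, ?_, ?_⟩
  · simp only [LM, if_neg hne]
    rw [Real.log_mul hy.ne' hT0.ne']
    ring_nf
  · simp only [Gmean, if_neg hne, if_neg (by positivity : 1/(m:ℝ) ≠ 0)]
    have e2 : (y*T*y) ^ ((1/(m:ℝ))/2) = y^((1:ℝ)/m) * T^(1/(2*(m:ℝ))) := by
      rw [show y*T*y = y*y*T by ring, Real.mul_rpow (by positivity) hT0.le,
        Real.mul_rpow hy.le hy.le, ← Real.rpow_add hy,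
        show (1/(m:ℝ))/2 + (1/(m:ℝ))/2 = 1/(m:ℝ) by ring,
        show (1/(m:ℝ))/2 = 1/(2*(m:ℝ)) by ring]
    rw [e2, hmul]
    rw [← hu]
    have h1 : y ^ ((1:ℝ)/m) * u - y ^ ((1:ℝ)/m) = y ^ ((1:ℝ)/m) * (u - 1) := by ring
    rw [h1]
    have hu1' : u - 1 ≠ 0 := by linarith
    have hy1 : y ^ ((1:ℝ)/m) ≠ 0 := (hyc _).ne'
    field_simp
  · simp only [Amean, if_neg hne, if_neg (by positivity : 1/(m:ℝ) ≠ 0)]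
    rw [hmul, ← hu]
    have h1 : y ^ ((1:ℝ)/m) * u - y ^ ((1:ℝ)/m) = y ^ ((1:ℝ)/m) * (u - 1) := by ring
    rw [h1]
    have hu1' : u - 1 ≠ 0 := by linarith
    have hy1 : y ^ ((1:ℝ)/m) ≠ 0 := (hyc _).ne'
    field_simp
  · simp only [Mmean, if_neg hne]
    have hβ : (m:ℝ)/((m:ℝ)+1) - 1 = -(1/((m:ℝ)+1)) := by field_simp; ring
    have hTβ : T ^ ((m:ℝ)/((m:ℝ)+1)) = s ^ m := by
      rw [hs, ← Real.rpow_natCast (T ^ ((1:ℝ)/((m:ℝ)+1))) m, ← Real.rpow_mul hT0.le]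
      congr 1
      field_simp
    have hTβ' : T ^ ((m:ℝ)/((m:ℝ)+1) - 1) = s⁻¹ := by
      rw [hβ, Real.rpow_neg hT0.le, hs]
    rw [hmul, hmul, hTβ, hTβ', hβ]
    have hy1 : (0:ℝ) < y ^ (-(1/((m:ℝ)+1))) := hyc _
    have hyy : y ^ ((m:ℝ)/((m:ℝ)+1)) = y ^ (-(1/((m:ℝ)+1))) * y := by
      rw [show (m:ℝ)/((m:ℝ)+1) = -(1/((m:ℝ)+1)) + 1 by field_simp; ring, Real.rpow_add hy,
        Real.rpow_one]
    rw [hyy]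
    have hs0 : (0:ℝ) < s := by linarith
    have hs1' : s - 1 ≠ 0 := by linarith
    have hw : y ^ (-(1/((m:ℝ)+1))) ≠ 0 := (hyc _).ne'
    rw [show y ^ (-(1/((m:ℝ)+1))) * s⁻¹ - y ^ (-(1/((m:ℝ)+1)))
        = -(y ^ (-(1/((m:ℝ)+1))) * (s - 1)) / s by field_simp; ring,
      show -(1/((m:ℝ)+1)) / ((m:ℝ)/((m:ℝ)+1)) = -(1/(m:ℝ)) by
        rw [div_eq_iff (by positivity : (m:ℝ)/((m:ℝ)+1) ≠ 0)]
        field_simp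
      ]
    field_simp
  · simp only [Mmean, if_neg hne]
    have hβ : ((m:ℝ)+1)/(m:ℝ) - 1 = 1/(m:ℝ) := by field_simp; ring
    have hTβ : T ^ (((m:ℝ)+1)/(m:ℝ)) = u ^ (m+1) := by
      rw [hu, ← Real.rpow_natCast (T ^ ((1:ℝ)/m)) (m+1), ← Real.rpow_mul hT0.le]
      congr 1
      push_cast
      field_simp
    rw [hmul, hmul, hTβ, hβ, ← hu]
    have hyy : y ^ (((m:ℝ)+1)/(m:ℝ)) = y ^ ((1:ℝ)/m) * y := by
      rw [show ((m:ℝ)+1)/(m:ℝ) = (1:ℝ)/m + 1 by field_simp; ring, Real.rpow_add hy,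
        Real.rpow_one]
    rw [hyy]
    have hy1 : y ^ ((1:ℝ)/m) ≠ 0 := (hyc _).ne'
    have hu1' : u - 1 ≠ 0 := by linarith
    have h1 : y ^ ((1:ℝ)/m) * u - y ^ ((1:ℝ)/m) = y ^ ((1:ℝ)/m) * (u - 1) := by ring
    rw [h1]
    field_simp

end formulas



section ineqs
variable (m : ℕ) (y T : ℝ)

lemma core (hm : 1 ≤ m) (hy : 0 < y) (hT : 1 < T) :
    Mmean ((m : ℝ) / ((m : ℝ) + 1)) (y*T) y ≤ Gmean (1 / (m : ℝ)) (y*T) y ∧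
    Gmean (1 / (m : ℝ)) (y*T) y ≤ LM (y*T) y ∧
    LM (y*T) y ≤ Amean (1 / (m : ℝ)) (y*T) y ∧
    Amean (1 / (m : ℝ)) (y*T) y ≤ Mmean (((m : ℝ) + 1) / (m : ℝ)) (y*T) y := by
  obtain ⟨hLM, hG, hA, hMl, hMh⟩ := vals m y T hm hy hT
  have hT0 : (0:ℝ) < T := by linarith
  have hM : (1:ℝ) ≤ (m:ℝ) := by exact_mod_cast hm
  have hM0 : (0:ℝ) < (m:ℝ) := by linarith
  have hM1 : (0:ℝ) < (m:ℝ) + 1 := by linarith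
  have hL0 : 0 < Real.log T := Real.log_pos hT
  set u := T ^ ((1:ℝ)/(m:ℝ)) with hu
  set s := T ^ ((1:ℝ)/((m:ℝ)+1)) with hs
  have hu1 : 1 < u := by
    rw [hu]; exact Real.one_lt_rpow_iff_of_pos hT0 |>.mpr (Or.inl ⟨hT, by positivity⟩)
  have hs1 : 1 < s := by
    rw [hs]; exact Real.one_lt_rpow_iff_of_pos hT0 |>.mpr (Or.inl ⟨hT, by positivity⟩)
  have hu1' : (0:ℝ) < u - 1 := by linarith
  have hs1' : (0:ℝ) < s - 1 := by linarith
  have hT1 : (0:ℝ) < T - 1 := by linarith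
  have hum : u ^ m = T := by
    rw [hu, ← Real.rpow_natCast (T ^ ((1:ℝ)/(m:ℝ))) m, ← Real.rpow_mul hT0.le]
    rw [show (1:ℝ)/(m:ℝ) * (m:ℕ) = 1 by field_simp, Real.rpow_one]
  have hlogu : Real.log T = (m:ℝ) * Real.log u := by
    rw [hu, Real.log_rpow hT0]
    field_simp
  have hTu : T ^ (1/(2*(m:ℝ))) = u ^ ((1:ℝ)/2) := by
    rw [hu, show 1/(2*(m:ℝ)) = (1:ℝ)/(m:ℝ) * (1/2) by ring, Real.rpow_mul hT0.le]
  have hPu : (∑ k ∈ range m, u^k) * (u-1) = T - 1 := by rw [← hum]; exact geom_sum_mul u m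
  have hPu' : (∑ k ∈ range (m+1), u^k) * (u-1) = u^(m+1) - 1 := geom_sum_mul u (m+1)
  have hPs : (∑ k ∈ range m, s^k) * (s-1) = s^m - 1 := geom_sum_mul s m
  refine ⟨?_, ?_, ?_, ?_⟩
  · -- Mmean low ≤ Gmean
    rw [hMl, hG]
    have e1 : y * (s * (s ^ m - 1)) / ((m:ℝ) * (s - 1))
        = y * (∑ k ∈ range m, T ^ (((k:ℝ)+1)/((m:ℝ)+1))) / (m:ℝ) := by
      rw [← hPs]
      rw [show s * ((∑ k ∈ range m, s^k) * (s-1)) = (s * ∑ k ∈ range m, s^k) * (s-1) by ring]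
      have : s * ∑ k ∈ range m, s^k = ∑ k ∈ range m, T ^ (((k:ℝ)+1)/((m:ℝ)+1)) := by
        rw [Finset.mul_sum]
        refine Finset.sum_congr rfl fun k _ => ?_
        rw [← pow_succ' s k, hs, ← Real.rpow_natCast (T ^ ((1:ℝ)/((m:ℝ)+1))) (k+1),
          ← Real.rpow_mul hT0.le]
        congr 1
        push_cast
        ring
      rw [this]
      field_simp
    have e2 : y * (T ^ (1/(2*(m:ℝ))) * (T - 1)) / ((m:ℝ) * (u - 1))
        = y * (∑ k ∈ range m, T ^ (((k:ℝ)+1/2)/(m:ℝ))) / (m:ℝ) := by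
      rw [← hPu]
      rw [show T ^ (1/(2*(m:ℝ))) * ((∑ k ∈ range m, u^k) * (u-1))
          = (T ^ (1/(2*(m:ℝ))) * ∑ k ∈ range m, u^k) * (u-1) by ring]
      have : T ^ (1/(2*(m:ℝ))) * ∑ k ∈ range m, u^k
          = ∑ k ∈ range m, T ^ (((k:ℝ)+1/2)/(m:ℝ)) := by
        rw [Finset.mul_sum]
        refine Finset.sum_congr rfl fun k _ => ?_
        rw [hu, ← Real.rpow_natCast (T ^ ((1:ℝ)/(m:ℝ))) k, ← Real.rpow_mul hT0.le,
          ← Real.rpow_add hT0]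
        congr 1
        field_simp
        ring
      rw [this, ← mul_assoc, mul_div_mul_right _ _ hu1'.ne']
    rw [e1, e2]
    gcongr y * ?_ / (m:ℝ)
    exact key3 m hm hT.le
  · -- Gmean ≤ LM
    rw [hG, hLM, div_le_div_iff₀ (mul_pos hM0 hu1') hL0, hTu, hlogu]
    have h := mul_le_mul_of_nonneg_left (key1 hu1)
      (mul_nonneg (mul_nonneg hy.le hT1.le) hM0.le)
    linarith [h,
      (by ring : y * (u ^ ((1:ℝ)/2) * (T - 1)) * ((m:ℝ) * Real.log u)
        = y * (T-1) * (m:ℝ) * (u ^ ((1:ℝ)/2) * Real.log u)),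
      (by ring : y * (T-1) * ((m:ℝ) * (u-1)) = y * (T-1) * (m:ℝ) * (u - 1))]
  · -- LM ≤ Amean
    rw [hLM, hA, div_le_div_iff₀ hL0 (mul_pos (by positivity : (0:ℝ) < 2 * (m:ℝ)) hu1'), hlogu]
    have h := mul_le_mul_of_nonneg_left (key2 hu1)
      (mul_nonneg (mul_nonneg hy.le hT1.le) hM0.le)
    linarith [h,
      (by ring : y * (T-1) * (2 * (m:ℝ) * (u-1)) = y * (T-1) * (m:ℝ) * (2 * (u - 1))),
      (by ring : y * ((u+1) * (T-1)) * ((m:ℝ) * Real.log u)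
        = y * (T-1) * (m:ℝ) * ((u+1) * Real.log u))]
  · -- Amean ≤ Mmean high
    rw [hA, hMh]
    have e1 : y * ((u + 1) * (T - 1)) / (2 * (m:ℝ) * (u - 1))
        = y * ((u + 1) * ∑ k ∈ range m, u^k) / (2 * (m:ℝ)) := by
      rw [← hPu]; field_simp
    have e2 : y * (u ^ (m+1) - 1) / (((m:ℝ)+1) * (u - 1))
        = y * (∑ k ∈ range (m+1), u^k) / ((m:ℝ)+1) := by
      rw [← hPu']; field_simp
    rw [e1, e2, div_le_div_iff₀ (by positivity : (0:ℝ) < 2*(m:ℝ)) hM1]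
    have h := mul_le_mul_of_nonneg_left (key4 m hu1.le) hy.le
    linarith [h,
      (by ring : y * ((u + 1) * ∑ k ∈ range m, u^k) * ((m:ℝ)+1)
        = y * (((m:ℝ)+1) * (u+1) * (∑ k ∈ range m, u^k))),
      (by ring : y * (∑ k ∈ range (m+1), u^k) * (2 * (m:ℝ))
        = y * (2*(m:ℝ) * (∑ k ∈ range (m+1), u^k)))]
end ineqs

end aux

/-- For `m ≥ 1` and `x, y > 0`:
`M_{m/(m+1)} ≤ G_{1/m} ≤ LM ≤ A_{1/m} ≤ M_{(m+1)/m}`. -/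
theorem statement8 (m : ℕ) (hm : 1 ≤ m) (x y : ℝ) (hx : 0 < x) (hy : 0 < y) :
    Mmean ((m : ℝ) / ((m : ℝ) + 1)) x y ≤ Gmean (1 / (m : ℝ)) x y ∧
    Gmean (1 / (m : ℝ)) x y ≤ LM x y ∧
    LM x y ≤ Amean (1 / (m : ℝ)) x y ∧
    Amean (1 / (m : ℝ)) x y ≤ Mmean (((m : ℝ) + 1) / (m : ℝ)) x y := by
  rcases lt_trichotomy x y with h | h | h
  · have hT : 1 < y / x := (one_lt_div hx).2 h
    have hxy : x * (y / x) = y := by field_simp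
    have hc := core m x (y / x) hm hx hT
    rw [hxy] at hc
    obtain ⟨h1, h2, h3, h4⟩ := hc
    rw [Mmean_symm ((m : ℝ) / ((m : ℝ) + 1)) x y, Gmean_symm (1 / (m : ℝ)) x y,
      LM_symm x y, Amean_symm (1 / (m : ℝ)) x y, Mmean_symm (((m : ℝ) + 1) / (m : ℝ)) x y]
    exact ⟨h1, h2, h3, h4⟩
  · subst h
    simp [LM, Amean, Gmean, Mmean]
  · have hT : 1 < x / y := (one_lt_div hy).2 h
    have hxy : y * (x / y) = x := by field_simp
    have hc := core m y (x / y) hm hy hT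
    rw [hxy] at hc
    exact hc
end
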